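/- arXiv:0710.4991 — 4 statements merged into one kernel-verified Lean document; each statement's English description precedes it below -/
import Mathlib

section
/- For a squarefree positive integer m with m ≡ 3 (mod 4), the equation x² + x·y + ((1+m)/4)·y² = 2 has a solution in integers x, y if and only if m = 7. -/
theorem stmt_1 (m : ℕ) (hm : 0 < m) (hsf : Squarefree m) (hmod : m % 4 = 3) :
    (∃ x y : ℤ, x ^ 2 + x * y + ((1 + (m : ℤ)) / 4) * y ^ 2 = 2) ↔ m = 7 := by
  constructor
  · rintro ⟨x, y, h⟩
    have hmz : (m : ℤ) % 4 = 3 := by omega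
    have h4 : 4 * ((1 + (m : ℤ)) / 4) = 1 + m := by omega
    obtain ⟨a, ha⟩ : ∃ a : ℤ, a ^ 2 + (m : ℤ) * y ^ 2 = 8 :=
      ⟨2 * x + y, by linear_combination 4 * h - y ^ 2 * h4⟩
    have hm3 : (3 : ℤ) ≤ (m : ℤ) := by omega
    have hy2 : y ^ 2 ≤ 2 := by nlinarith [sq_nonneg a, sq_nonneg y]
    have hy1 : -1 ≤ y := by nlinarith [sq_nonneg (y + 1)]
    have hy1' : y ≤ 1 := by nlinarith [sq_nonneg (y - 1)]
    have ha2 : a ^ 2 ≤ 8 := by nlinarith [sq_nonneg y, mul_nonneg (by positivity : (0:ℤ) ≤ (m:ℤ)) (sq_nonneg y)]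
    have ha1 : -2 ≤ a := by nlinarith [sq_nonneg (a + 3)]
    have ha1' : a ≤ 2 := by nlinarith [sq_nonneg (a - 3)]
    interval_cases a <;> interval_cases y <;> norm_num at ha <;> omega
  · rintro rfl
    exact ⟨0, 1, by norm_num⟩
end

section
/- The quadratic form x² + 2y² + 4z² over ℤ represents every positive integer except those of the form 2^d·u with d odd and u ≡ 7 (mod 8). -/
/-! ### Binary quadratic forms: Gauss reduction -/

def bF (A B C y z : ℤ) : ℤ := A*y^2 + 2*B*y*z + C*z^2

def PosB (A B C : ℤ) : Prop := ∀ y z : ℤ, ¬(y = 0 ∧ z = 0) → 1 ≤ bF A B C y z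

def SOS2 (A B C : ℤ) : Prop :=
  ∃ p q r s : ℤ, ∀ y z : ℤ, bF A B C y z = (p*y+q*z)^2 + (r*y+s*z)^2

lemma round_lemma (a m : ℤ) (hm : 1 ≤ m) : ∃ t : ℤ, 4*(a + t*m)^2 ≤ m^2 := by
  have h0 : 0 ≤ a % m := Int.emod_nonneg a (by omega)
  have h1 : a % m < m := Int.emod_lt_of_pos a (by omega)
  have h2 : a % m + m * (a / m) = a := Int.emod_add_mul_ediv a m
  rcases le_or_gt (2 * (a % m)) m with h | h
  · refine ⟨-(a/m), ?_⟩
    have : a + (-(a/m))*m = a % m := by linarith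
    rw [this]; nlinarith
  · refine ⟨-(a/m) - 1, ?_⟩
    have : a + (-(a/m) - 1)*m = a % m - m := by linarith
    rw [this]; nlinarith

lemma posB_A {A B C : ℤ} (h : PosB A B C) : 1 ≤ A := by
  have := h 1 0 (by simp); simpa [bF] using this

lemma posB_C {A B C : ℤ} (h : PosB A B C) : 1 ≤ C := by
  have := h 0 1 (by simp); simpa [bF] using this

lemma bF_shear_right (A B C t y z : ℤ) :
    bF A (B + t*A) (A*t^2 + 2*B*t + C) y z = bF A B C (y + t*z) z := by
  simp only [bF]; ring

lemma bF_shear_left (A B C t y z : ℤ) :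
    bF (A + 2*B*t + C*t^2) (B + t*C) C y z = bF A B C y (z + t*y) := by
  simp only [bF]; ring

lemma posB_shear_right {A B C : ℤ} (t : ℤ) (h : PosB A B C) :
    PosB A (B + t*A) (A*t^2 + 2*B*t + C) := by
  intro y z hyz
  rw [bF_shear_right]
  refine h _ _ ?_
  rintro ⟨h1, h2⟩; subst h2; simp at h1; exact hyz ⟨h1, rfl⟩

lemma posB_shear_left {A B C : ℤ} (t : ℤ) (h : PosB A B C) :
    PosB (A + 2*B*t + C*t^2) (B + t*C) C := by
  intro y z hyz
  rw [bF_shear_left]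
  refine h _ _ ?_
  rintro ⟨h1, h2⟩; subst h1; simp at h2; exact hyz ⟨rfl, h2⟩

lemma bin1 : ∀ (N : ℕ) (A B C : ℤ), (A + C).toNat ≤ N → PosB A B C →
    ∃ y z : ℤ, ¬(y = 0 ∧ z = 0) ∧ 3*(bF A B C y z)^2 ≤ 4*(A*C - B^2) := by
  intro N
  induction N using Nat.strong_induction_on with
  | _ N IH =>
    intro A B C hN h
    have hA : 1 ≤ A := posB_A h
    have hC : 1 ≤ C := posB_C h
    rcases le_or_gt A C with hAC | hAC
    · rcases le_or_gt (4*B^2) (A^2) with hB | hB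
      · refine ⟨1, 0, by simp, ?_⟩
        have hv : bF A B C 1 0 = A := by simp [bF]
        rw [hv]; nlinarith
      · obtain ⟨t, ht⟩ := round_lemma B A hA
        obtain ⟨B', hB'⟩ : ∃ v : ℤ, v = B + t*A := ⟨_, rfl⟩
        obtain ⟨C', hC'⟩ : ∃ v : ℤ, v = A*t^2 + 2*B*t + C := ⟨_, rfl⟩
        have hkey : ∀ y z : ℤ, bF A B' C' y z = bF A B C (y + t*z) z := by
          intro y z; rw [hB', hC', bF_shear_right]
        have h' : PosB A B' C' := by rw [hB', hC']; exact posB_shear_right t h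
        have hdet : A*C' - B'^2 = A*C - B^2 := by rw [hB', hC']; ring
        have htB : 4*B'^2 ≤ A^2 := by rw [hB']; exact ht
        have hC'C : C' < C := by nlinarith
        have h1C : 1 ≤ C' := posB_C h'
        have hmeas : (A + C').toNat < N := by omega
        obtain ⟨y, z, hyz, hv⟩ := IH _ hmeas A B' C' le_rfl h'
        refine ⟨y + t*z, z, ?_, ?_⟩
        · rintro ⟨h1, h2⟩; subst h2; simp at h1; exact hyz ⟨h1, rfl⟩
        · rw [← hkey, ← hdet]; exact hv
    · rcases le_or_gt (4*B^2) (C^2) with hB | hB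
      · refine ⟨0, 1, by simp, ?_⟩
        have hv : bF A B C 0 1 = C := by simp [bF]
        rw [hv]; nlinarith
      · obtain ⟨t, ht⟩ := round_lemma B C hC
        obtain ⟨B', hB'⟩ : ∃ v : ℤ, v = B + t*C := ⟨_, rfl⟩
        obtain ⟨A', hA'⟩ : ∃ v : ℤ, v = A + 2*B*t + C*t^2 := ⟨_, rfl⟩
        have hkey : ∀ y z : ℤ, bF A' B' C y z = bF A B C y (z + t*y) := by
          intro y z; rw [hB', hA', bF_shear_left]
        have h' : PosB A' B' C := by rw [hB', hA']; exact posB_shear_left t h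
        have hdet : A'*C - B'^2 = A*C - B^2 := by rw [hB', hA']; ring
        have htB : 4*B'^2 ≤ C^2 := by rw [hB']; exact ht
        have hA'A : A' < A := by nlinarith
        have h1A : 1 ≤ A' := posB_A h'
        have hmeas : (A' + C).toNat < N := by omega
        obtain ⟨y, z, hyz, hv⟩ := IH _ hmeas A' B' C le_rfl h'
        refine ⟨y, z + t*y, ?_, ?_⟩
        · rintro ⟨h1, h2⟩; subst h1; simp at h2; exact hyz ⟨rfl, h2⟩
        · rw [← hkey, ← hdet]; exact hv

lemma bin2 : ∀ (N : ℕ) (A B C : ℤ), (A + C).toNat ≤ N → PosB A B C →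
    A*C - B^2 = 1 → SOS2 A B C := by
  intro N
  induction N using Nat.strong_induction_on with
  | _ N IH =>
    intro A B C hN h hdet
    have hA : 1 ≤ A := posB_A h
    have hC : 1 ≤ C := posB_C h
    rcases le_or_gt A C with hAC | hAC
    · rcases le_or_gt (4*B^2) (A^2) with hB | hB
      · have hA1 : A = 1 := by nlinarith
        have hB0 : B = 0 := by nlinarith
        have hC1 : C = 1 := by rw [hA1, hB0] at hdet; linarith
        subst hA1; subst hB0; subst hC1
        exact ⟨1, 0, 0, 1, fun y z => by simp only [bF]; ring⟩
      · obtain ⟨t, ht⟩ := round_lemma B A hA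
        obtain ⟨B', hB'⟩ : ∃ v : ℤ, v = B + t*A := ⟨_, rfl⟩
        obtain ⟨C', hC'⟩ : ∃ v : ℤ, v = A*t^2 + 2*B*t + C := ⟨_, rfl⟩
        have hkey : ∀ y z : ℤ, bF A B' C' y z = bF A B C (y + t*z) z := by
          intro y z; rw [hB', hC', bF_shear_right]
        have h' : PosB A B' C' := by rw [hB', hC']; exact posB_shear_right t h
        have hdet' : A*C' - B'^2 = 1 := by rw [hB', hC', ← hdet]; ring
        have htB : 4*B'^2 ≤ A^2 := by rw [hB']; exact ht
        have hC'C : C' < C := by nlinarith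
        have h1C : 1 ≤ C' := posB_C h'
        have hmeas : (A + C').toNat < N := by omega
        obtain ⟨p, q, r, s, hsos⟩ := IH _ hmeas A B' C' le_rfl h' hdet'
        refine ⟨p, q - p*t, r, s - r*t, fun y z => ?_⟩
        have h2 : bF A B C y z = bF A B' C' (y - t*z) z := by
          rw [hkey]; ring_nf
        rw [h2, hsos]; ring
    · rcases le_or_gt (4*B^2) (C^2) with hB | hB
      · have hC1 : C = 1 := by nlinarith
        have hB0 : B = 0 := by nlinarith
        have hA1 : A = 1 := by rw [hC1, hB0] at hdet; linarith
        subst hA1; subst hB0; subst hC1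
        exact ⟨1, 0, 0, 1, fun y z => by simp only [bF]; ring⟩
      · obtain ⟨t, ht⟩ := round_lemma B C hC
        obtain ⟨B', hB'⟩ : ∃ v : ℤ, v = B + t*C := ⟨_, rfl⟩
        obtain ⟨A', hA'⟩ : ∃ v : ℤ, v = A + 2*B*t + C*t^2 := ⟨_, rfl⟩
        have hkey : ∀ y z : ℤ, bF A' B' C y z = bF A B C y (z + t*y) := by
          intro y z; rw [hB', hA', bF_shear_left]
        have h' : PosB A' B' C := by rw [hB', hA']; exact posB_shear_left t h
        have hdet' : A'*C - B'^2 = 1 := by rw [hB', hA', ← hdet]; ring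
        have htB : 4*B'^2 ≤ C^2 := by rw [hB']; exact ht
        have hA'A : A' < A := by nlinarith
        have h1A : 1 ≤ A' := posB_A h'
        have hmeas : (A' + C).toNat < N := by omega
        obtain ⟨p, q, r, s, hsos⟩ := IH _ hmeas A' B' C le_rfl h' hdet'
        refine ⟨p - q*t, q, r - s*t, s, fun y z => ?_⟩
        have h2 : bF A B C y z = bF A' B' C y (z - t*y) := by
          rw [hkey]; ring_nf
        rw [h2, hsos]; ring

/-! ### Ternary quadratic forms -/

structure T3 where
  a11 : ℤ
  a22 : ℤ
  a33 : ℤ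
  a12 : ℤ
  a13 : ℤ
  a23 : ℤ

def T3.F (G : T3) (x y z : ℤ) : ℤ :=
  G.a11*x^2 + G.a22*y^2 + G.a33*z^2 + 2*G.a12*x*y + 2*G.a13*x*z + 2*G.a23*y*z

def T3.det (G : T3) : ℤ :=
  G.a11*G.a22*G.a33 + 2*(G.a12*G.a13*G.a23) - G.a11*G.a23^2 - G.a22*G.a13^2 - G.a33*G.a12^2

def NzVal (G : T3) (k : ℤ) : Prop := ∃ x y z : ℤ, ¬(x = 0 ∧ y = 0 ∧ z = 0) ∧ G.F x y z = k

def T3.Pos (G : T3) : Prop := ∀ k, NzVal G k → 1 ≤ k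

def T3.SOS (G : T3) : Prop :=
  ∃ p1 p2 p3 q1 q2 q3 r1 r2 r3 : ℤ, ∀ x y z : ℤ,
    G.F x y z = (p1*x+p2*y+p3*z)^2 + (q1*x+q2*y+q3*z)^2 + (r1*x+r2*y+r3*z)^2

def Mov (G G' : T3) : Prop :=
  G'.det = G.det ∧ (G'.SOS → G.SOS) ∧ (G.Pos → G'.Pos) ∧ ∀ k, NzVal G' k → NzVal G k

lemma mov_refl (G : T3) : Mov G G := ⟨rfl, id, id, fun _ => id⟩

lemma mov_trans {G1 G2 G3 : T3} (h1 : Mov G1 G2) (h2 : Mov G2 G3) : Mov G1 G3 :=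
  ⟨h2.1.trans h1.1, fun s => h1.2.1 (h2.2.1 s), fun p => h2.2.2.1 (h1.2.2.1 p),
   fun k hk => h1.2.2.2 k (h2.2.2.2 k hk)⟩

/-- generic change of variables lemma -/
lemma mov_gen (G G' : T3)
    (e11 e12 e13 e21 e22 e23 e31 e32 e33 f11 f12 f13 f21 f22 f23 f31 f32 f33 : ℤ)
    (hdet : G'.det = G.det)
    (H1 : ∀ x y z : ℤ, G'.F x y z =
      G.F (e11*x+e12*y+e13*z) (e21*x+e22*y+e23*z) (e31*x+e32*y+e33*z))
    (H2 : ∀ x y z : ℤ,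
      f11*(e11*x+e12*y+e13*z) + f12*(e21*x+e22*y+e23*z) + f13*(e31*x+e32*y+e33*z) = x ∧
      f21*(e11*x+e12*y+e13*z) + f22*(e21*x+e22*y+e23*z) + f23*(e31*x+e32*y+e33*z) = y ∧
      f31*(e11*x+e12*y+e13*z) + f32*(e21*x+e22*y+e23*z) + f33*(e31*x+e32*y+e33*z) = z)
    (H3 : ∀ x y z : ℤ,
      e11*(f11*x+f12*y+f13*z) + e12*(f21*x+f22*y+f23*z) + e13*(f31*x+f32*y+f33*z) = x ∧
      e21*(f11*x+f12*y+f13*z) + e22*(f21*x+f22*y+f23*z) + e23*(f31*x+f32*y+f33*z) = y ∧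
      e31*(f11*x+f12*y+f13*z) + e32*(f21*x+f22*y+f23*z) + e33*(f31*x+f32*y+f33*z) = z) :
    Mov G G' := by
  have hGF : ∀ x y z : ℤ, G.F x y z =
      G'.F (f11*x+f12*y+f13*z) (f21*x+f22*y+f23*z) (f31*x+f32*y+f33*z) := by
    intro x y z
    rw [H1, (H3 x y z).1, (H3 x y z).2.1, (H3 x y z).2.2]
  have hval : ∀ k, NzVal G' k → NzVal G k := by
    rintro k ⟨x, y, z, hnz, hv⟩
    refine ⟨e11*x+e12*y+e13*z, e21*x+e22*y+e23*z, e31*x+e32*y+e33*z, ?_, by rw [← H1]; exact hv⟩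
    rintro ⟨h1, h2, h3⟩
    obtain ⟨k1, k2, k3⟩ := H2 x y z
    rw [h1, h2, h3] at k1 k2 k3
    simp at k1 k2 k3
    exact hnz ⟨k1.symm, k2.symm, k3.symm⟩
  refine ⟨hdet, ?_, ?_, hval⟩
  · rintro ⟨p1, p2, p3, q1, q2, q3, r1, r2, r3, hs⟩
    refine ⟨p1*f11+p2*f21+p3*f31, p1*f12+p2*f22+p3*f32, p1*f13+p2*f23+p3*f33,
            q1*f11+q2*f21+q3*f31, q1*f12+q2*f22+q3*f32, q1*f13+q2*f23+q3*f33,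
            r1*f11+r2*f21+r3*f31, r1*f12+r2*f22+r3*f32, r1*f13+r2*f23+r3*f33, ?_⟩
    intro x y z
    rw [hGF x y z, hs]; ring
  · intro hP k hk
    exact hP k (hval k hk)

/-! the six elementary operations -/

def sw12 (G : T3) : T3 := ⟨G.a22, G.a11, G.a33, G.a12, G.a23, G.a13⟩
def sw13 (G : T3) : T3 := ⟨G.a33, G.a22, G.a11, G.a23, G.a13, G.a12⟩
def sw23 (G : T3) : T3 := ⟨G.a11, G.a33, G.a22, G.a13, G.a12, G.a23⟩
def sh12 (G : T3) (q : ℤ) : T3 :=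
  ⟨G.a11 + G.a22*q^2 + 2*G.a12*q, G.a22, G.a33, G.a12 + G.a22*q, G.a13 + G.a23*q, G.a23⟩
def sh21 (G : T3) (q : ℤ) : T3 :=
  ⟨G.a11, G.a22 + G.a11*q^2 + 2*G.a12*q, G.a33, G.a12 + G.a11*q, G.a13, G.a23 + G.a13*q⟩
def sh31 (G : T3) (q : ℤ) : T3 :=
  ⟨G.a11, G.a22, G.a33 + G.a11*q^2 + 2*G.a13*q, G.a12, G.a13 + G.a11*q, G.a23 + G.a12*q⟩

lemma sw12_F (G : T3) (x y z : ℤ) : (sw12 G).F x y z = G.F y x z := by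
  simp only [T3.F, sw12]; ring
lemma sw13_F (G : T3) (x y z : ℤ) : (sw13 G).F x y z = G.F z y x := by
  simp only [T3.F, sw13]; ring
lemma sw23_F (G : T3) (x y z : ℤ) : (sw23 G).F x y z = G.F x z y := by
  simp only [T3.F, sw23]; ring
lemma sh12_F (G : T3) (q x y z : ℤ) : (sh12 G q).F x y z = G.F x (q*x + y) z := by
  simp only [T3.F, sh12]; ring
lemma sh21_F (G : T3) (q x y z : ℤ) : (sh21 G q).F x y z = G.F (x + q*y) y z := by
  simp only [T3.F, sh21]; ring
lemma sh31_F (G : T3) (q x y z : ℤ) : (sh31 G q).F x y z = G.F (x + q*z) y z := by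
  simp only [T3.F, sh31]; ring

lemma mov_sw12 (G : T3) : Mov G (sw12 G) := by
  apply mov_gen G _ 0 1 0 1 0 0 0 0 1 0 1 0 1 0 0 0 0 1
  · simp only [T3.det, sw12]; ring
  · intro x y z; rw [sw12_F]; congr 1 <;> ring
  · intro x y z; refine ⟨by ring, by ring, by ring⟩
  · intro x y z; refine ⟨by ring, by ring, by ring⟩

lemma mov_sw13 (G : T3) : Mov G (sw13 G) := by
  apply mov_gen G _ 0 0 1 0 1 0 1 0 0 0 0 1 0 1 0 1 0 0
  · simp only [T3.det, sw13]; ring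
  · intro x y z; rw [sw13_F]; congr 1 <;> ring
  · intro x y z; refine ⟨by ring, by ring, by ring⟩
  · intro x y z; refine ⟨by ring, by ring, by ring⟩

lemma mov_sw23 (G : T3) : Mov G (sw23 G) := by
  apply mov_gen G _ 1 0 0 0 0 1 0 1 0 1 0 0 0 0 1 0 1 0
  · simp only [T3.det, sw23]; ring
  · intro x y z; rw [sw23_F]; congr 1 <;> ring
  · intro x y z; refine ⟨by ring, by ring, by ring⟩
  · intro x y z; refine ⟨by ring, by ring, by ring⟩

lemma mov_sh12 (G : T3) (q : ℤ) : Mov G (sh12 G q) := by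
  apply mov_gen G _ 1 0 0 q 1 0 0 0 1 1 0 0 (-q) 1 0 0 0 1
  · simp only [T3.det, sh12]; ring
  · intro x y z; rw [sh12_F]; congr 1 <;> ring
  · intro x y z; refine ⟨by ring, by ring, by ring⟩
  · intro x y z; refine ⟨by ring, by ring, by ring⟩

lemma mov_sh21 (G : T3) (q : ℤ) : Mov G (sh21 G q) := by
  apply mov_gen G _ 1 q 0 0 1 0 0 0 1 1 (-q) 0 0 1 0 0 0 1
  · simp only [T3.det, sh21]; ring
  · intro x y z; rw [sh21_F]; congr 1 <;> ring
  · intro x y z; refine ⟨by ring, by ring, by ring⟩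
  · intro x y z; refine ⟨by ring, by ring, by ring⟩

lemma mov_sh31 (G : T3) (q : ℤ) : Mov G (sh31 G q) := by
  apply mov_gen G _ 1 0 q 0 1 0 0 0 1 1 0 (-q) 0 1 0 0 0 1
  · simp only [T3.det, sh31]; ring
  · intro x y z; rw [sh31_F]; congr 1 <;> ring
  · intro x y z; refine ⟨by ring, by ring, by ring⟩
  · intro x y z; refine ⟨by ring, by ring, by ring⟩

/-! three more shears -/

def sh13 (G : T3) (q : ℤ) : T3 :=
  ⟨G.a11 + G.a33*q^2 + 2*G.a13*q, G.a22, G.a33, G.a12 + G.a23*q, G.a13 + G.a33*q, G.a23⟩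
def sh23 (G : T3) (q : ℤ) : T3 :=
  ⟨G.a11, G.a22 + G.a33*q^2 + 2*G.a23*q, G.a33, G.a12 + G.a13*q, G.a13, G.a23 + G.a33*q⟩
def sh32 (G : T3) (q : ℤ) : T3 :=
  ⟨G.a11, G.a22, G.a33 + G.a22*q^2 + 2*G.a23*q, G.a12, G.a13 + G.a12*q, G.a23 + G.a22*q⟩

lemma sh13_F (G : T3) (q x y z : ℤ) : (sh13 G q).F x y z = G.F x y (q*x + z) := by
  simp only [T3.F, sh13]; ring
lemma sh23_F (G : T3) (q x y z : ℤ) : (sh23 G q).F x y z = G.F x y (q*y + z) := by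
  simp only [T3.F, sh23]; ring
lemma sh32_F (G : T3) (q x y z : ℤ) : (sh32 G q).F x y z = G.F x (y + q*z) z := by
  simp only [T3.F, sh32]; ring

lemma mov_sh13 (G : T3) (q : ℤ) : Mov G (sh13 G q) := by
  apply mov_gen G _ 1 0 0 0 1 0 q 0 1 1 0 0 0 1 0 (-q) 0 1
  · simp only [T3.det, sh13]; ring
  · intro x y z; rw [sh13_F]; congr 1 <;> ring
  · intro x y z; refine ⟨by ring, by ring, by ring⟩
  · intro x y z; refine ⟨by ring, by ring, by ring⟩

lemma mov_sh23 (G : T3) (q : ℤ) : Mov G (sh23 G q) := by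
  apply mov_gen G _ 1 0 0 0 1 0 0 q 1 1 0 0 0 1 0 0 (-q) 1
  · simp only [T3.det, sh23]; ring
  · intro x y z; rw [sh23_F]; congr 1 <;> ring
  · intro x y z; refine ⟨by ring, by ring, by ring⟩
  · intro x y z; refine ⟨by ring, by ring, by ring⟩

lemma mov_sh32 (G : T3) (q : ℤ) : Mov G (sh32 G q) := by
  apply mov_gen G _ 1 0 0 0 1 q 0 0 1 1 0 0 0 1 (-q) 0 0 1
  · simp only [T3.det, sh32]; ring
  · intro x y z; rw [sh32_F]; congr 1 <;> ring
  · intro x y z; refine ⟨by ring, by ring, by ring⟩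
  · intro x y z; refine ⟨by ring, by ring, by ring⟩

/-- division step facts -/
lemma divstep (a b : ℤ) (hb : b ≠ 0) :
    b * (a / b) + a % b = a ∧ 0 ≤ a % b ∧ (a % b) < |b| := by
  refine ⟨Int.mul_ediv_add_emod a b, Int.emod_nonneg a hb, ?_⟩
  rcases lt_or_gt_of_ne hb with h | h
  · rw [abs_of_neg h, ← Int.emod_neg]
    exact Int.emod_lt_of_pos a (by omega)
  · rw [abs_of_pos h]; exact Int.emod_lt_of_pos a h

/-- reduce a vector to a unit coordinate vector -/
lemma reduce_vec : ∀ (N : ℕ) (G : T3) (u1 u2 u3 w : ℤ),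
    u1.natAbs + u2.natAbs + u3.natAbs ≤ N → ¬(u1 = 0 ∧ u2 = 0 ∧ u3 = 0) →
    G.F u1 u2 u3 = w →
    ∃ G' : T3, Mov G G' ∧ ∃ d : ℤ, d ≠ 0 ∧ d^2 * G'.a11 = w := by
  intro N
  induction N using Nat.strong_induction_on with
  | _ N IH =>
    intro G u1 u2 u3 w hN hnz hw
    by_cases h1 : u1 = 0
    · by_cases h2 : u2 = 0
      · -- u3 ≠ 0, base via sw13
        have h3 : u3 ≠ 0 := fun h => hnz ⟨h1, h2, h⟩
        subst h1; subst h2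
        refine ⟨sw13 G, mov_sw13 G, u3, h3, ?_⟩
        rw [show u3^2 * (sw13 G).a11 = (sw13 G).F u3 0 0 from by simp only [T3.F]; ring,
          sw13_F]
        exact hw
      · by_cases h3 : u3 = 0
        · subst h1; subst h3
          refine ⟨sw12 G, mov_sw12 G, u2, h2, ?_⟩
          rw [show u2^2 * (sw12 G).a11 = (sw12 G).F u2 0 0 from by simp only [T3.F]; ring,
            sw12_F]
          exact hw
        · -- u2, u3 ≠ 0 : pair (2,3) or (3,2)
          rcases le_or_gt u2.natAbs u3.natAbs with hc | hc
          · -- reduce slot 3 by slot 2 : sh23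
            obtain ⟨hdiv, hr0, hrlt⟩ := divstep u3 u2 h2
            have hkey : (sh23 G (u3 / u2)).F u1 u2 (u3 % u2) = w := by
              rw [sh23_F]
              have : u3 / u2 * u2 + u3 % u2 = u3 := by linarith
              rw [this, hw]
            have habs : |u2| = (u2.natAbs : ℤ) := Int.abs_eq_natAbs u2
            have habs3 : (u3 % u2).natAbs = u3 % u2 := by omega
            have hmeas : u1.natAbs + u2.natAbs + (u3 % u2).natAbs < N := by omega
            obtain ⟨G', hmov, hd⟩ := IH _ hmeas (sh23 G (u3 / u2)) u1 u2 (u3 % u2) w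
              le_rfl (fun h => h2 h.2.1) hkey
            exact ⟨G', mov_trans (mov_sh23 G _) hmov, hd⟩
          · obtain ⟨hdiv, hr0, hrlt⟩ := divstep u2 u3 h3
            have hkey : (sh32 G (u2 / u3)).F u1 (u2 % u3) u3 = w := by
              rw [sh32_F]
              have : u2 % u3 + u2 / u3 * u3 = u2 := by linarith
              rw [this, hw]
            have habs : |u3| = (u3.natAbs : ℤ) := Int.abs_eq_natAbs u3
            have habs3 : (u2 % u3).natAbs = u2 % u3 := by omega
            have hmeas : u1.natAbs + (u2 % u3).natAbs + u3.natAbs < N := by omega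
            obtain ⟨G', hmov, hd⟩ := IH _ hmeas (sh32 G (u2 / u3)) u1 (u2 % u3) u3 w
              le_rfl (fun h => h3 h.2.2) hkey
            exact ⟨G', mov_trans (mov_sh32 G _) hmov, hd⟩
    · by_cases h2 : u2 = 0
      · by_cases h3 : u3 = 0
        · subst h2; subst h3
          refine ⟨G, mov_refl G, u1, h1, ?_⟩
          rw [show u1^2 * G.a11 = G.F u1 0 0 from by simp only [T3.F]; ring]
          exact hw
        · -- u1, u3 ≠ 0 : pair (1,3) or (3,1)
          rcases le_or_gt u1.natAbs u3.natAbs with hc | hc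
          · obtain ⟨hdiv, hr0, hrlt⟩ := divstep u3 u1 h1
            have hkey : (sh13 G (u3 / u1)).F u1 u2 (u3 % u1) = w := by
              rw [sh13_F]
              have : u3 / u1 * u1 + u3 % u1 = u3 := by linarith
              rw [this, hw]
            have habs : |u1| = (u1.natAbs : ℤ) := Int.abs_eq_natAbs u1
            have habs3 : (u3 % u1).natAbs = u3 % u1 := by omega
            have hmeas : u1.natAbs + u2.natAbs + (u3 % u1).natAbs < N := by omega
            obtain ⟨G', hmov, hd⟩ := IH _ hmeas (sh13 G (u3 / u1)) u1 u2 (u3 % u1) w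
              le_rfl (fun h => h1 h.1) hkey
            exact ⟨G', mov_trans (mov_sh13 G _) hmov, hd⟩
          · obtain ⟨hdiv, hr0, hrlt⟩ := divstep u1 u3 h3
            have hkey : (sh31 G (u1 / u3)).F (u1 % u3) u2 u3 = w := by
              rw [sh31_F]
              have : u1 % u3 + u1 / u3 * u3 = u1 := by linarith
              rw [this, hw]
            have habs : |u3| = (u3.natAbs : ℤ) := Int.abs_eq_natAbs u3
            have habs3 : (u1 % u3).natAbs = u1 % u3 := by omega
            have hmeas : (u1 % u3).natAbs + u2.natAbs + u3.natAbs < N := by omega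
            obtain ⟨G', hmov, hd⟩ := IH _ hmeas (sh31 G (u1 / u3)) (u1 % u3) u2 u3 w
              le_rfl (fun h => h3 h.2.2) hkey
            exact ⟨G', mov_trans (mov_sh31 G _) hmov, hd⟩
      · -- u1, u2 ≠ 0 : pair (1,2) or (2,1)
        rcases le_or_gt u1.natAbs u2.natAbs with hc | hc
        · obtain ⟨hdiv, hr0, hrlt⟩ := divstep u2 u1 h1
          have hkey : (sh12 G (u2 / u1)).F u1 (u2 % u1) u3 = w := by
            rw [sh12_F]
            have : u2 / u1 * u1 + u2 % u1 = u2 := by linarith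
            rw [this, hw]
          have habs : |u1| = (u1.natAbs : ℤ) := Int.abs_eq_natAbs u1
          have habs3 : (u2 % u1).natAbs = u2 % u1 := by omega
          have hmeas : u1.natAbs + (u2 % u1).natAbs + u3.natAbs < N := by omega
          obtain ⟨G', hmov, hd⟩ := IH _ hmeas (sh12 G (u2 / u1)) u1 (u2 % u1) u3 w
            le_rfl (fun h => h1 h.1) hkey
          exact ⟨G', mov_trans (mov_sh12 G _) hmov, hd⟩
        · obtain ⟨hdiv, hr0, hrlt⟩ := divstep u1 u2 h2
          have hkey : (sh21 G (u1 / u2)).F (u1 % u2) u2 u3 = w := by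
            rw [sh21_F]
            have : u1 % u2 + u1 / u2 * u2 = u1 := by linarith
            rw [this, hw]
          have habs : |u2| = (u2.natAbs : ℤ) := Int.abs_eq_natAbs u2
          have habs3 : (u1 % u2).natAbs = u1 % u2 := by omega
          have hmeas : (u1 % u2).natAbs + u2.natAbs + u3.natAbs < N := by omega
          obtain ⟨G', hmov, hd⟩ := IH _ hmeas (sh21 G (u1 / u2)) (u1 % u2) u2 u3 w
            le_rfl (fun h => h2 h.2.1) hkey
          exact ⟨G', mov_trans (mov_sh21 G _) hmov, hd⟩

set_option maxHeartbeats 2000000 in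
theorem main3 (G : T3) (hpos : G.Pos) (hdet : G.det = 1) : G.SOS := by
  classical
  have hv11 : NzVal G G.a11 := ⟨1, 0, 0, by simp, by simp only [T3.F]; ring⟩
  have ha11 : 1 ≤ G.a11 := hpos _ hv11
  have hex : ∃ k : ℕ, NzVal G (k : ℤ) := ⟨G.a11.toNat, by
    rwa [show ((G.a11.toNat : ℤ)) = G.a11 by omega]⟩
  obtain ⟨M, hMspec, hMmin⟩ : ∃ M : ℕ, NzVal G (M : ℤ) ∧ ∀ k, k < M → ¬ NzVal G (k : ℤ) :=
    ⟨Nat.find hex, Nat.find_spec hex, fun k hk => Nat.find_min hex hk⟩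
  have hm1 : 1 ≤ (M : ℤ) := hpos _ hMspec
  have hlow : ∀ v : ℤ, NzVal G v → (M : ℤ) ≤ v := by
    intro v hv
    have h1 : 1 ≤ v := hpos v hv
    have h2 : NzVal G ((v.toNat : ℤ)) := by rwa [show ((v.toNat : ℤ)) = v by omega]
    by_contra hc
    have : v.toNat < M := by omega
    exact hMmin v.toNat this h2
  obtain ⟨u1, u2, u3, hunz, huv⟩ := hMspec
  obtain ⟨G1, hmov1, d, hd, hda⟩ :=
    reduce_vec (u1.natAbs + u2.natAbs + u3.natAbs) G u1 u2 u3 (M : ℤ) le_rfl hunz huv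
  have hposval : ∀ (G' : T3), Mov G G' → ∀ v, NzVal G' v → (M:ℤ) ≤ v := by
    intro G' hmov v hv
    exact hlow v (hmov.2.2.2 v hv)
  have hv11' : NzVal G1 G1.a11 := ⟨1, 0, 0, by simp, by simp only [T3.F]; ring⟩
  have hMa : (M:ℤ) ≤ G1.a11 := hposval G1 hmov1 _ hv11'
  have hd1 : 1 ≤ d^2 := by rcases lt_or_gt_of_ne hd with h | h <;> nlinarith
  have ha11M : G1.a11 = (M : ℤ) := by
    have h1 : G1.a11 ≤ (M:ℤ) := by
      nlinarith [mul_nonneg (by linarith : (0:ℤ) ≤ d^2 - 1) (by linarith : (0:ℤ) ≤ G1.a11)]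
    linarith
  obtain ⟨t, ht⟩ := round_lemma G1.a12 (M:ℤ) hm1
  obtain ⟨G2, hG2⟩ : ∃ v : T3, v = sh21 G1 t := ⟨_, rfl⟩
  have hmov2 : Mov G G2 := by rw [hG2]; exact mov_trans hmov1 (mov_sh21 G1 t)
  have h2a11 : G2.a11 = (M:ℤ) := by rw [hG2]; exact ha11M
  have h2a12 : 4*G2.a12^2 ≤ (M:ℤ)^2 := by
    have e : G2.a12 = G1.a12 + t*(M:ℤ) := by
      simp only [hG2, sh21]; rw [ha11M]; ring
    rw [e]; exact ht
  obtain ⟨s, hs⟩ := round_lemma G2.a13 (M:ℤ) hm1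
  obtain ⟨G3, hG3⟩ : ∃ v : T3, v = sh31 G2 s := ⟨_, rfl⟩
  have hmov3 : Mov G G3 := by rw [hG3]; exact mov_trans hmov2 (mov_sh31 G2 s)
  have h3a11 : G3.a11 = (M:ℤ) := by rw [hG3]; exact h2a11
  have h3a12' : 4*G3.a12^2 ≤ (M:ℤ)^2 := by rw [hG3]; exact h2a12
  have h3a13 : 4*G3.a13^2 ≤ (M:ℤ)^2 := by
    have e : G3.a13 = G2.a13 + s*(M:ℤ) := by
      simp only [hG3, sh31]; rw [h2a11]; ring
    rw [e]; exact hs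
  have h3det : G3.det = 1 := by rw [hmov3.1, hdet]
  obtain ⟨A, hA⟩ : ∃ v : ℤ, v = (M:ℤ)*G3.a22 - G3.a12^2 := ⟨_, rfl⟩
  obtain ⟨B, hB⟩ : ∃ v : ℤ, v = (M:ℤ)*G3.a23 - G3.a12*G3.a13 := ⟨_, rfl⟩
  obtain ⟨C, hC⟩ : ∃ v : ℤ, v = (M:ℤ)*G3.a33 - G3.a13^2 := ⟨_, rfl⟩
  have hdet3 : (M:ℤ)*G3.a22*G3.a33 + 2*(G3.a12*G3.a13*G3.a23) - (M:ℤ)*G3.a23^2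
      - G3.a22*G3.a13^2 - G3.a33*G3.a12^2 = 1 := by
    have h := h3det
    simp only [T3.det] at h
    rw [h3a11] at h
    exact h
  have hkey : ∀ x y z : ℤ, (M:ℤ) * G3.F x y z =
      ((M:ℤ)*x + G3.a12*y + G3.a13*z)^2 + bF A B C y z := by
    intro x y z
    rw [hA, hB, hC]
    simp only [T3.F, bF]
    rw [h3a11]; ring
  have hdetK : A*C - B^2 = (M:ℤ) := by
    rw [hA, hB, hC]
    linear_combination (M:ℤ) * hdet3
  have hKlow : ∀ y z : ℤ, ¬(y = 0 ∧ z = 0) → 3*(M:ℤ)^2 ≤ 4 * bF A B C y z := by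
    intro y z hyz
    obtain ⟨x, hx⟩ := round_lemma (G3.a12*y + G3.a13*z) (M:ℤ) hm1
    have hval : (M:ℤ) ≤ G3.F x y z := by
      refine hposval G3 hmov3 _ ⟨x, y, z, ?_, rfl⟩
      rintro ⟨hh1, hh2, hh3⟩; exact hyz ⟨hh2, hh3⟩
    have hk := hkey x y z
    nlinarith [hx, hval, hm1]
  have hKpos : PosB A B C := by
    intro y z hyz
    have h3 := hKlow y z hyz
    have h4 : (3:ℤ) ≤ 4 * bF A B C y z := by nlinarith [hm1]
    omega
  obtain ⟨y0, z0, hyz0, hbnd⟩ := bin1 (A + C).toNat A B C le_rfl hKpos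
  have hVlow : 3*(M:ℤ)^2 ≤ 4 * bF A B C y0 z0 := hKlow y0 z0 hyz0
  have hVpos : 1 ≤ bF A B C y0 z0 := hKpos y0 z0 hyz0
  rw [hdetK] at hbnd
  have hsq : 9*(M:ℤ)^4 ≤ 16*(bF A B C y0 z0)^2 := by
    nlinarith [mul_nonneg (by linarith : (0:ℤ) ≤ 4*bF A B C y0 z0 - 3*(M:ℤ)^2)
      (by nlinarith [hm1, hVpos] : (0:ℤ) ≤ 4*bF A B C y0 z0 + 3*(M:ℤ)^2)]
  have h27 : 27*(M:ℤ)^4 ≤ 64*(M:ℤ) := by linarith [hsq, hbnd]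
  have hM2 : (M:ℤ) < 2 := by
    by_contra hcon
    push_neg at hcon
    have hMM : 2*(M:ℤ) ≤ (M:ℤ)^2 := by
      nlinarith [mul_nonneg (by linarith : (0:ℤ) ≤ (M:ℤ)) (by linarith : (0:ℤ) ≤ (M:ℤ) - 2)]
    have h4 : 4*(M:ℤ)^2 ≤ (M:ℤ)^4 := by
      nlinarith [mul_nonneg (by linarith : (0:ℤ) ≤ (M:ℤ)^2 - 2*(M:ℤ))
        (by nlinarith : (0:ℤ) ≤ (M:ℤ)^2 + 2*(M:ℤ))]
    linarith [h27, hMM, h4, hm1]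
  have hM1 : (M:ℤ) = 1 := by omega
  rw [hM1] at h3a11
  obtain ⟨G4, hG4⟩ : ∃ v : T3, v = sh21 G3 (-G3.a12) := ⟨_, rfl⟩
  have hmov4 : Mov G G4 := by rw [hG4]; exact mov_trans hmov3 (mov_sh21 G3 (-G3.a12))
  have h4a11 : G4.a11 = 1 := by rw [hG4]; exact h3a11
  have h4a12 : G4.a12 = 0 := by
    simp only [hG4, sh21]; rw [h3a11]; ring
  obtain ⟨G5, hG5⟩ : ∃ v : T3, v = sh31 G4 (-G4.a13) := ⟨_, rfl⟩
  have hmov5 : Mov G G5 := by rw [hG5]; exact mov_trans hmov4 (mov_sh31 G4 (-G4.a13))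
  have h5a11 : G5.a11 = 1 := by rw [hG5]; exact h4a11
  have h5a12 : G5.a12 = 0 := by rw [hG5]; exact h4a12
  have h5a13 : G5.a13 = 0 := by
    simp only [hG5, sh31]; rw [h4a11]; ring
  have h5det : G5.det = 1 := by rw [hmov5.1, hdet]
  have h5pos : G5.Pos := hmov5.2.2.1 hpos
  have hsplit : ∀ x y z : ℤ, G5.F x y z = x^2 + bF G5.a22 G5.a23 G5.a33 y z := by
    intro x y z
    simp only [T3.F, bF]
    rw [h5a11, h5a12, h5a13]; ring
  have hposB : PosB G5.a22 G5.a23 G5.a33 := by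
    intro y z hyz
    have h := h5pos (G5.F 0 y z) ⟨0, y, z, by rintro ⟨_, hh2, hh3⟩; exact hyz ⟨hh2, hh3⟩, rfl⟩
    rw [hsplit] at h
    nlinarith [h]
  have hdet5 : G5.a22*G5.a33 - G5.a23^2 = 1 := by
    have h := h5det
    simp only [T3.det] at h
    rw [h5a11, h5a12, h5a13] at h
    linear_combination h
  obtain ⟨p, q, r, s2, hsos⟩ := bin2 ((G5.a22 + G5.a33).toNat) _ _ _ le_rfl hposB hdet5
  have hS : G5.SOS := ⟨1, 0, 0, 0, p, q, 0, r, s2, by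
    intro x y z; rw [hsplit, hsos]; ring⟩
  exact hmov5.2.1 hS

def S3 (m : ℤ) : Prop := ∃ a b c : ℤ, a^2 + b^2 + c^2 = m

theorem rep3 (n q B : ℤ) (hn : 1 ≤ n) (hq : 1 ≤ q)
    (h1 : n ∣ q + 1) (h2 : q ∣ B^2 + n) : S3 n := by
  obtain ⟨g, hg⟩ := h1
  obtain ⟨m', hm'⟩ := h2
  have hm1 : 1 ≤ m' := by nlinarith [sq_nonneg B]
  obtain ⟨d, hd⟩ : ∃ v : ℤ, v = m'*g - 1 := ⟨_, rfl⟩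
  have R3 : n*d = m' + B^2 := by rw [hd]; linear_combination (-m') * hg - hm'
  obtain ⟨G, hG⟩ : ∃ v : T3, v = ⟨n, d, g, -B, 1, 0⟩ := ⟨_, rfl⟩
  have ha11 : G.a11 = n := by rw [hG]
  have hdet : G.det = 1 := by
    have hc : n * G.det = n * 1 := by
      rw [hG]; simp only [T3.det]
      linear_combination (n*g - 1) * R3 - m' * hg - hm'
    exact mul_left_cancel₀ (by omega) hc
  have hkey : ∀ x y z : ℤ, n*m'*(G.F x y z) =
      m'*(n*x - B*y + z)^2 + (m'*y + B*z)^2 + n*z^2 := by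
    intro x y z
    rw [hG]; simp only [T3.F]
    linear_combination (m'*y^2) * R3 - (m'*z^2) * hg - z^2 * hm'
  have hpos : G.Pos := by
    rintro k ⟨x, y, z, hnz, hv⟩
    rcases le_or_gt 1 k with h | h
    · exact h
    have hk0 : k ≤ 0 := by omega
    exfalso
    have hid := hkey x y z
    rw [hv] at hid
    have t1 : 0 ≤ m' * (n*x - B*y + z)^2 := mul_nonneg (by linarith) (sq_nonneg _)
    have t2 : 0 ≤ (m'*y + B*z)^2 := sq_nonneg _
    have t3 : n*m'*k ≤ 0 := by
      nlinarith [mul_nonneg (mul_nonneg (by linarith : (0:ℤ) ≤ n) (by linarith : (0:ℤ) ≤ m'))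
        (by linarith : (0:ℤ) ≤ -k)]
    have hzz : n*z^2 ≤ 0 := by linarith
    have hz2 : z^2 ≤ 0 := by
      nlinarith [mul_nonneg (by linarith : (0:ℤ) ≤ n - 1) (sq_nonneg z)]
    have hz : z = 0 := by
      have h0 := le_antisymm hz2 (sq_nonneg z)
      exact pow_eq_zero_iff two_ne_zero |>.mp h0
    subst hz
    have hyy : (m'*y + B*0)^2 ≤ 0 := by linarith
    have hy2 : (m'*y)^2 ≤ 0 := by nlinarith [hyy]
    have hy : y = 0 := by
      have h0 : (m'*y)^2 = 0 := le_antisymm hy2 (sq_nonneg _)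
      have := pow_eq_zero_iff two_ne_zero |>.mp h0
      rcases mul_eq_zero.mp this with h | h
      · exfalso; omega
      · exact h
    subst hy
    have hxx : m' * (n*x - B*0 + 0)^2 ≤ 0 := by linarith
    have hx2 : (n*x)^2 ≤ 0 := by nlinarith [sq_nonneg (n*x)]
    have hx : x = 0 := by
      have h0 : (n*x)^2 = 0 := le_antisymm hx2 (sq_nonneg _)
      have := pow_eq_zero_iff two_ne_zero |>.mp h0
      rcases mul_eq_zero.mp this with h | h
      · exfalso; omega
      · exact h
    exact hnz ⟨hx, rfl, rfl⟩
  obtain ⟨p1, p2, p3, q1, q2, q3, r1, r2, r3, hsos⟩ := main3 G hpos hdet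
  refine ⟨p1, q1, r1, ?_⟩
  have h := hsos 1 0 0
  have hF : G.F 1 0 0 = n := by rw [hG]; simp only [T3.F]; ring
  rw [hF] at h
  simp only [mul_one, mul_zero, add_zero] at h
  linarith [h]

/-- Dirichlet application -/
lemma get_prime (mm : ℕ) (hmm : 2 ≤ mm) (a₀ : ℕ) (hco : Nat.Coprime a₀ mm) (N : ℕ) :
    ∃ p : ℕ, N < p ∧ p.Prime ∧ p ≡ a₀ [MOD mm] := by
  haveI : NeZero mm := ⟨by omega⟩
  obtain ⟨p, hp, hpp, hpe⟩ := Nat.forall_exists_prime_gt_and_eq_mod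
      (q := mm) (a := (a₀ : ZMod mm)) ((ZMod.isUnit_iff_coprime a₀ mm).mpr hco) N
  exact ⟨p, hp, hpp, (ZMod.natCast_eq_natCast_iff _ _ _).mp hpe⟩

/-- extract square root of -n mod p -/
lemma get_root (n p : ℕ) (hp : p.Prime) (hJ : jacobiSym (-(n:ℤ)) p = 1) :
    ∃ B : ℕ, (p:ℤ) ∣ (B:ℤ)^2 + n := by
  haveI : Fact p.Prime := ⟨hp⟩
  obtain ⟨r, hr⟩ := ZMod.isSquare_of_jacobiSym_eq_one hJ
  refine ⟨r.val, ?_⟩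
  rw [← ZMod.intCast_zmod_eq_zero_iff_dvd]
  push_cast
  have hv : ((r.val : ℕ) : ZMod p) = r := ZMod.natCast_rightInverse r
  rw [hv]
  have h2 : -((n:ℕ) : ZMod p) = r * r := by push_cast at hr; exact hr
  linear_combination -h2

/-- coprimality helper -/
lemma cop_helper (a n k : ℕ) (hodd : a % 2 = 1) (h1 : Nat.gcd a n ∣ 1) :
    Nat.Coprime a (2^k * n) := by
  have h2 : Nat.Coprime a n := Nat.dvd_one.mp h1
  have h3 : Nat.Coprime a 2 := by
    rw [Nat.coprime_comm]
    exact (Nat.prime_two.coprime_iff_not_dvd).mpr (by omega)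
  exact Nat.Coprime.mul_right (Nat.Coprime.pow_right k h3) h2

/-- case n % 4 = 1 -/
lemma arith_odd1 (n : ℕ) (h4 : n % 4 = 1) :
    ∃ q B : ℤ, 1 ≤ q ∧ (n:ℤ) ∣ q + 1 ∧ q ∣ B^2 + (n:ℤ) := by
  have hn1 : 1 ≤ n := by omega
  -- residue 2n - 1 mod 4n
  have hg1 : Nat.gcd (2*n - 1) n ∣ 1 := by
    have d2 : Nat.gcd (2*n-1) n ∣ n := Nat.gcd_dvd_right _ _
    have d3 : Nat.gcd (2*n-1) n ∣ 2*n := Dvd.dvd.mul_left d2 2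
    have d4 := Nat.dvd_sub d3 (Nat.gcd_dvd_left _ _)
    simpa [show 2*n - (2*n-1) = 1 by omega] using d4
  have hco : Nat.Coprime (2*n - 1) (4*n) := by
    have := cop_helper (2*n-1) n 2 (by omega) hg1
    simpa [show (2:ℕ)^2 = 4 by norm_num] using this
  obtain ⟨p, hpgt, hpp, hpe⟩ := get_prime (4*n) (by omega) (2*n-1) hco (n+2)
  haveI : Fact p.Prime := ⟨hpp⟩
  -- congruences
  have hmod4 : p % 4 = 1 := by
    have h : p % 4 = (2*n-1) % 4 := hpe.of_dvd (dvd_mul_right 4 n)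
    omega
  have hmodn : (n:ℤ) ∣ (p:ℤ) + 1 := by
    have h : p ≡ 2*n-1 [MOD n] := hpe.of_dvd (dvd_mul_left n 4)
    have h2 : (n:ℤ) ∣ ((2*n-1 : ℕ) : ℤ) - (p:ℤ) := h.dvd
    have h3 : ((2*n-1 : ℕ) : ℤ) = 2*(n:ℤ) - 1 := by push_cast [Nat.cast_sub (by omega : 1 ≤ 2*n)]; ring
    rw [h3] at h2
    obtain ⟨c, hc⟩ := h2
    exact ⟨2 - c, by linarith⟩
  have hoddp : Odd p := Nat.odd_iff.mpr (by omega)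
  have hoddn : Odd n := Nat.odd_iff.mpr (by omega)
  have hpn : Int.ModEq (n:ℤ) (p:ℤ) (-1) := by
    rw [Int.modEq_iff_dvd]
    have : (-1 : ℤ) - p = -((p:ℤ)+1) := by ring
    rw [this]
    exact Dvd.dvd.neg_right hmodn
  -- Jacobi symbol computation
  have hJ : jacobiSym (-(n:ℤ)) p = 1 := by
    have e1 : (-(n:ℤ)) = (-1) * (n:ℤ) := by ring
    rw [e1, jacobiSym.mul_left, jacobiSym.at_neg_one hoddp, ZMod.χ₄_nat_one_mod_four hmod4,
      jacobiSym.quadratic_reciprocity_one_mod_four' hoddn hmod4,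
      jacobiSym.mod_left' hpn, jacobiSym.at_neg_one hoddn, ZMod.χ₄_nat_one_mod_four h4]
    norm_num
  obtain ⟨B, hB⟩ := get_root n p hpp hJ
  exact ⟨(p:ℤ), (B:ℤ), by exact_mod_cast hpp.one_lt.le, hmodn, hB⟩

lemma odd_sq_mod8 (m : ℕ) (h : m % 2 = 1) : m^2 % 8 = 1 := by
  obtain ⟨k, hk⟩ := Nat.odd_iff.mpr h
  obtain ⟨j, hj⟩ := Nat.even_mul_succ_self k
  have h2 : m^2 = 4*(k*(k+1)) + 1 := by subst hk; ring
  omega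

/-- case n % 8 = 3 : q = 2p -/
lemma arith_odd3 (n : ℕ) (h8 : n % 8 = 3) :
    ∃ q B : ℤ, 1 ≤ q ∧ (n:ℤ) ∣ q + 1 ∧ q ∣ B^2 + (n:ℤ) := by
  have hn1 : 3 ≤ n := by omega
  have hg1 : Nat.gcd ((n-1)/2) n ∣ 1 := by
    have d2 : Nat.gcd ((n-1)/2) n ∣ n := Nat.gcd_dvd_right _ _
    have d3 : Nat.gcd ((n-1)/2) n ∣ 2*((n-1)/2) := Dvd.dvd.mul_left (Nat.gcd_dvd_left _ _) 2
    have d4 := Nat.dvd_sub d2 d3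
    simpa [show n - 2*((n-1)/2) = 1 by omega] using d4
  have hco : Nat.Coprime ((n-1)/2) (4*n) := by
    have := cop_helper ((n-1)/2) n 2 (by omega) hg1
    simpa [show (2:ℕ)^2 = 4 by norm_num] using this
  obtain ⟨p, hpgt, hpp, hpe⟩ := get_prime (4*n) (by omega) ((n-1)/2) hco (n+2)
  haveI : Fact p.Prime := ⟨hpp⟩
  have hmod4 : p % 4 = 1 := by
    have h : p % 4 = ((n-1)/2) % 4 := hpe.of_dvd (dvd_mul_right 4 n)
    omega
  have hmodn : (n:ℤ) ∣ 2*(p:ℤ) + 1 := by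
    have h : p ≡ (n-1)/2 [MOD n] := hpe.of_dvd (dvd_mul_left n 4)
    have h2 : (n:ℤ) ∣ (((n-1)/2 : ℕ) : ℤ) - (p:ℤ) := h.dvd
    have h3 : 2*(((n-1)/2 : ℕ) : ℤ) + 1 = n := by
      have : 2*((n-1)/2) + 1 = n := by omega
      exact_mod_cast congrArg (Nat.cast : ℕ → ℤ) this
    obtain ⟨c, hc⟩ := h2
    exact ⟨1 - 2*c, by linarith⟩
  have hoddp : Odd p := Nat.odd_iff.mpr (by omega)
  have hoddn : Odd n := Nat.odd_iff.mpr (by omega)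
  have hpn : Int.ModEq (n:ℤ) (2*(p:ℤ)) (-1) := by
    rw [Int.modEq_iff_dvd]
    have : (-1 : ℤ) - 2*p = -(2*(p:ℤ)+1) := by ring
    rw [this]
    exact Dvd.dvd.neg_right hmodn
  have hJ2n : jacobiSym 2 n = -1 := by
    rw [jacobiSym.at_two hoddn, ZMod.χ₈_nat_eq_if_mod_eight,
      show n % 2 = 1 by omega, h8]
    norm_num
  have hJpn : jacobiSym (p:ℤ) n = 1 := by
    have e : jacobiSym 2 n * jacobiSym (p:ℤ) n = jacobiSym (2*(p:ℤ)) n :=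
      (jacobiSym.mul_left 2 (p:ℤ) n).symm
    rw [jacobiSym.mod_left' hpn, jacobiSym.at_neg_one hoddn,
      ZMod.χ₄_nat_three_mod_four (by omega)] at e
    rw [hJ2n] at e
    linarith
  have hJ : jacobiSym (-(n:ℤ)) p = 1 := by
    have e1 : (-(n:ℤ)) = (-1) * (n:ℤ) := by ring
    rw [e1, jacobiSym.mul_left, jacobiSym.at_neg_one hoddp, ZMod.χ₄_nat_one_mod_four hmod4,
      jacobiSym.quadratic_reciprocity_one_mod_four' hoddn hmod4, hJpn]
    norm_num
  obtain ⟨B0, hB0⟩ := get_root n p hpp hJ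
  -- make B odd
  obtain ⟨B, hBp, hBodd⟩ : ∃ B : ℕ, (p:ℤ) ∣ (B:ℤ)^2 + n ∧ B % 2 = 1 := by
    rcases Nat.even_or_odd B0 with he | ho
    · refine ⟨B0 + p, ?_, by have := hpp.two_le; rcases he with ⟨k, hk⟩; omega⟩
      have : ((B0 + p : ℕ) : ℤ)^2 + n = ((B0:ℤ)^2 + n) + (p:ℤ)*(2*B0 + p) := by push_cast; ring
      rw [this]
      exact dvd_add hB0 (Dvd.intro _ rfl)
    · exact ⟨B0, hB0, Nat.odd_iff.mp ho⟩
  have h2dvd : (2:ℤ) ∣ (B:ℤ)^2 + n := by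
    have hBo : Odd ((B:ℤ)^2) := (Int.odd_iff.mpr (by omega : (B:ℤ) % 2 = 1)).pow
    have hno : Odd (n:ℤ) := Int.odd_iff.mpr (by omega)
    exact (hBo.add_odd hno).two_dvd
  have hcop : IsCoprime (2:ℤ) (p:ℤ) := by
    rw [Int.isCoprime_iff_gcd_eq_one]
    have e2 : Int.gcd 2 (p:ℤ) = Nat.gcd 2 p := by
      rw [show (2:ℤ) = ((2:ℕ):ℤ) by norm_num, Int.gcd_natCast_natCast]
    rw [e2]
    have : ¬ 2 ∣ p := by omega
    exact (Nat.Prime.coprime_iff_not_dvd Nat.prime_two).mpr this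
  refine ⟨2*(p:ℤ), (B:ℤ), by have := hpp.two_le; omega, hmodn, hcop.mul_dvd h2dvd hBp⟩

/-- even cases : n = 2 n₀ -/
lemma arith_even (n : ℕ) (h8 : n % 8 = 2 ∨ n % 8 = 6) :
    ∃ q B : ℤ, 1 ≤ q ∧ (n:ℤ) ∣ q + 1 ∧ q ∣ B^2 + (n:ℤ) := by
  obtain ⟨n₀, hn₀⟩ : ∃ m, n = 2*m := ⟨n/2, by omega⟩
  have hodd₀ : n₀ % 2 = 1 := by omega
  have hsq : n₀^2 % 8 = 1 := odd_sq_mod8 n₀ hodd₀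
  -- a₀ = c * n₀^2 - 1 with c = 2 or 4
  obtain ⟨c, hc, ha8'⟩ : ∃ c : ℕ, (c = 2 ∨ c = 4) ∧
      (c*n₀^2 - 1) % 8 = (if n % 8 = 2 then 1 else 3) := by
    rcases h8 with h | h
    · exact ⟨2, Or.inl rfl, by rw [if_pos h]; omega⟩
    · exact ⟨4, Or.inr rfl, by rw [if_neg (by omega)]; omega⟩
  have hg1 : Nat.gcd (c*n₀^2 - 1) n₀ ∣ 1 := by
    have d2 : Nat.gcd (c*n₀^2-1) n₀ ∣ n₀ := Nat.gcd_dvd_right _ _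
    have d3 : Nat.gcd (c*n₀^2-1) n₀ ∣ c*n₀^2 := by
      have h5 : Nat.gcd (c*n₀^2-1) n₀ ∣ (c*n₀)*n₀ := Dvd.dvd.mul_left d2 (c*n₀)
      rwa [show (c*n₀)*n₀ = c*n₀^2 by ring] at h5
    have d4 := Nat.dvd_sub d3 (Nat.gcd_dvd_left _ _)
    have hcn : 1 ≤ c*n₀^2 := by
      have h1 : 1 ≤ n₀ := by omega
      have h2 : 1 ≤ n₀^2 := by nlinarith
      rcases hc with h | h <;> subst h <;> omega
    simpa [show c*n₀^2 - (c*n₀^2-1) = 1 by omega] using d4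
  have hco : Nat.Coprime (c*n₀^2 - 1) (8*n₀) := by
    have := cop_helper (c*n₀^2-1) n₀ 3 (by rcases hc with h | h <;> subst h <;> omega) hg1
    simpa [show (2:ℕ)^3 = 8 by norm_num] using this
  obtain ⟨p, hpgt, hpp, hpe⟩ := get_prime (8*n₀) (by omega) (c*n₀^2-1) hco (n+2)
  haveI : Fact p.Prime := ⟨hpp⟩
  have hmod8 : p % 8 = (if n % 8 = 2 then 1 else 3) := by
    have h : p % 8 = (c*n₀^2-1) % 8 := hpe.of_dvd (dvd_mul_right 8 n₀)
    rw [h, ha8']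
  have hmodn₀ : (n₀:ℤ) ∣ (p:ℤ) + 1 := by
    have h : p ≡ c*n₀^2-1 [MOD n₀] := hpe.of_dvd (dvd_mul_left n₀ 8)
    have h2 : (n₀:ℤ) ∣ ((c*n₀^2-1 : ℕ) : ℤ) - (p:ℤ) := h.dvd
    have hcn : 1 ≤ c*n₀^2 := by
      have h1 : 1 ≤ n₀ := by omega
      have h2 : 1 ≤ n₀^2 := by nlinarith
      rcases hc with h' | h' <;> subst h' <;> omega
    have h3 : ((c*n₀^2-1 : ℕ) : ℤ) = (c:ℤ)*(n₀:ℤ)^2 - 1 := by push_cast [Nat.cast_sub hcn]; ring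
    rw [h3] at h2
    obtain ⟨k, hk⟩ := h2
    exact ⟨(c:ℤ)*n₀ - k, by linarith [hk]⟩
  have hoddp : Odd p := Nat.odd_iff.mpr (by rcases h8 with h | h <;> simp [h] at hmod8 <;> omega)
  have hoddn₀ : Odd n₀ := Nat.odd_iff.mpr hodd₀
  have hmodn : (n:ℤ) ∣ (p:ℤ) + 1 := by
    have h2 : (2:ℤ) ∣ (p:ℤ) + 1 := by
      have : p % 2 = 1 := Nat.odd_iff.mp hoddp
      omega
    have hcop : IsCoprime (2:ℤ) (n₀:ℤ) := by
      rw [Int.isCoprime_iff_gcd_eq_one]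
      have e : Int.gcd 2 (n₀:ℤ) = Nat.gcd 2 n₀ := by
        rw [show (2:ℤ) = ((2:ℕ):ℤ) by norm_num, Int.gcd_natCast_natCast]
      rw [e]
      exact (Nat.Prime.coprime_iff_not_dvd Nat.prime_two).mpr (by omega)
    have := hcop.mul_dvd h2 hmodn₀
    rwa [hn₀, show ((2*n₀ : ℕ):ℤ) = 2*(n₀:ℤ) by push_cast; ring]
  have hpn : Int.ModEq (n₀:ℤ) (p:ℤ) (-1) := by
    rw [Int.modEq_iff_dvd]
    have : (-1 : ℤ) - p = -((p:ℤ)+1) := by ring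
    rw [this]
    exact Dvd.dvd.neg_right hmodn₀
  have hJ : jacobiSym (-(n:ℤ)) p = 1 := by
    have e1 : (-(n:ℤ)) = (-1) * (2 * (n₀:ℤ)) := by rw [hn₀]; push_cast; ring
    rw [e1, jacobiSym.mul_left, jacobiSym.mul_left, jacobiSym.at_neg_one hoddp,
      jacobiSym.at_two hoddp]
    rcases h8 with h | h
    · simp only [h] at hmod8; norm_num at hmod8
      rw [ZMod.χ₄_nat_one_mod_four (by omega), ZMod.χ₈_nat_eq_if_mod_eight,
        show p % 2 = 1 by omega, hmod8,
        jacobiSym.quadratic_reciprocity_one_mod_four (by omega : n₀ % 4 = 1) hoddp,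
        jacobiSym.mod_left' hpn, jacobiSym.at_neg_one hoddn₀,
        ZMod.χ₄_nat_one_mod_four (by omega)]
      norm_num
    · simp only [h] at hmod8; norm_num at hmod8
      rw [ZMod.χ₄_nat_three_mod_four (by omega), ZMod.χ₈_nat_eq_if_mod_eight,
        show p % 2 = 1 by omega, hmod8,
        jacobiSym.quadratic_reciprocity_three_mod_four (by omega : n₀ % 4 = 3) (by omega : p % 4 = 3),
        jacobiSym.mod_left' hpn, jacobiSym.at_neg_one hoddn₀,
        ZMod.χ₄_nat_three_mod_four (by omega)]
      norm_num
  obtain ⟨B, hB⟩ := get_root n p hpp hJ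
  exact ⟨(p:ℤ), (B:ℤ), by exact_mod_cast hpp.one_lt.le, hmodn, hB⟩


lemma main_s3 (n : ℕ) (hn : 1 ≤ n)
    (h8 : n % 8 = 1 ∨ n % 8 = 2 ∨ n % 8 = 3 ∨ n % 8 = 5 ∨ n % 8 = 6) : S3 (n:ℤ) := by
  obtain ⟨q, B, hq, hdvd1, hdvd2⟩ : ∃ q B : ℤ, 1 ≤ q ∧ (n:ℤ) ∣ q + 1 ∧ q ∣ B^2 + (n:ℤ) := by
    rcases h8 with h | h | h | h | h
    · exact arith_odd1 n (by omega)
    · exact arith_even n (Or.inl h)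
    · exact arith_odd3 n h
    · exact arith_odd1 n (by omega)
    · exact arith_even n (Or.inr h)
  exact rep3 (n:ℤ) q B (by exact_mod_cast hn) hq hdvd1 hdvd2

/-! ### parity helpers -/

lemma sq_mod2 (x : ℤ) : x^2 % 2 = x % 2 := by
  obtain ⟨q, hq⟩ : ∃ q, x = 2*q ∨ x = 2*q + 1 := ⟨x/2, by omega⟩
  rcases hq with h | h <;> subst h
  · have : (2*q)^2 = 2*(2*q^2) := by ring
    rw [this]
    omega
  · have : (2*q+1)^2 = 2*(2*q^2 + 2*q) + 1 := by ring
    rw [this]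
    omega

lemma sq_mod4 (x : ℤ) : x^2 % 4 = 0 ∧ x % 2 = 0 ∨ x^2 % 4 = 1 ∧ x % 2 = 1 := by
  obtain ⟨q, hq⟩ : ∃ q, x = 2*q ∨ x = 2*q + 1 := ⟨x/2, by omega⟩
  rcases hq with h | h <;> subst h
  · left
    have : (2*q)^2 = 4*q^2 := by ring
    rw [this]
    omega
  · right
    have : (2*q+1)^2 = 4*(q^2 + q) + 1 := by ring
    rw [this]
    omega

lemma sq_mod8 (x : ℤ) : x^2 % 8 = 0 ∨ x^2 % 8 = 1 ∨ x^2 % 8 = 4 := by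
  obtain ⟨q, r, hr0, hr4, hq⟩ : ∃ q r, 0 ≤ r ∧ r < 4 ∧ x = 4*q + r :=
    ⟨x/4, x%4, by omega, by omega, by omega⟩
  have hx2 : x^2 = 8*(2*q^2 + q*r) + r^2 := by subst hq; ring
  interval_cases r <;> rw [hx2] <;> norm_num <;> omega

/-! ### the equivalence with x² + 2y² + 4z² -/

lemma equiv_help (n a b c : ℤ) (hpar : a % 2 = b % 2) (hd : 4 ∣ a - b)
    (heq : a^2 + b^2 + c^2 = 2*n) : ∃ x y z : ℤ, x^2 + 2*y^2 + 4*z^2 = n := by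
  have hc : c % 2 = 0 := by
    have h1 := sq_mod2 a
    have h2 := sq_mod2 b
    have h3 := sq_mod2 c
    omega
  obtain ⟨y, hy⟩ : ∃ y, c = 2*y := ⟨c/2, by omega⟩
  obtain ⟨z, hz⟩ : ∃ z, a - b = 4*z := hd
  obtain ⟨x, hx⟩ : ∃ x, a + b = 2*x := ⟨(a+b)/2, by omega⟩
  have ha : a = x + 2*z := by omega
  have hb : b = x - 2*z := by omega
  refine ⟨x, y, z, ?_⟩
  have h2 : 2*(x^2 + 2*y^2 + 4*z^2) = 2*n := by
    rw [← heq, ha, hb, hy]; ring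
  linarith

lemma equiv_help2 (n a b c : ℤ) (hpar : a % 2 = b % 2)
    (heq : a^2 + b^2 + c^2 = 2*n) : ∃ x y z : ℤ, x^2 + 2*y^2 + 4*z^2 = n := by
  rcases Int.even_or_odd a with ⟨k, hk⟩ | ⟨k, hk⟩
  · -- a even, so b even; c even too; pick suitable pair among a,b,c mod 4
    have hb : b % 2 = 0 := by omega
    have hc : c % 2 = 0 := by
      have h1 := sq_mod2 a
      have h2 := sq_mod2 b
      have h3 := sq_mod2 c
      omega
    have hcases : 4 ∣ a - b ∨ 4 ∣ a - c ∨ 4 ∣ b - c := by omega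
    rcases hcases with h | h | h
    · exact equiv_help n a b c hpar h heq
    · exact equiv_help n a c b (by omega) h (by linarith)
    · exact equiv_help n b c a (by omega) h (by linarith)
  · -- a odd, b odd
    have hcases : 4 ∣ a - b ∨ 4 ∣ a - (-b) := by omega
    rcases hcases with h | h
    · exact equiv_help n a b c hpar h heq
    · exact equiv_help n a (-b) c (by omega) h (by linarith [heq]; )

lemma form_iff_s3 (n : ℤ) : (∃ x y z : ℤ, x^2 + 2*y^2 + 4*z^2 = n) ↔ S3 (2*n) := by
  constructor
  · rintro ⟨x, y, z, h⟩
    exact ⟨x + 2*z, x - 2*z, 2*y, by linarith [h, sq_nonneg x]⟩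
  · rintro ⟨a, b, c, h⟩
    have hpar : a % 2 = b % 2 ∨ a % 2 = c % 2 ∨ b % 2 = c % 2 := by omega
    rcases hpar with hp | hp | hp
    · exact equiv_help2 n a b c hp h
    · exact equiv_help2 n a c b hp (by linarith)
    · exact equiv_help2 n b c a hp (by linarith)

/-! ### impossibility -/

lemma no_s3 : ∀ (t : ℕ) (k : ℕ), ¬ S3 ((4:ℤ)^t * (8*k+7)) := by
  intro t
  induction t with
  | zero =>
    rintro k ⟨a, b, c, h⟩
    simp only [pow_zero, one_mul] at h
    have h8 : ((8:ℤ)*k+7) % 8 = 7 := by omega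
    rcases sq_mod8 a with h1 | h1 | h1 <;> rcases sq_mod8 b with h2 | h2 | h2 <;>
      rcases sq_mod8 c with h3 | h3 | h3 <;> omega
  | succ t IH =>
    rintro k ⟨a, b, c, h⟩
    have h4 : a^2 + b^2 + c^2 = 4 * (4^t * (8*k+7)) := by rw [h]; ring
    have ha := sq_mod4 a
    have hb := sq_mod4 b
    have hc := sq_mod4 c
    have hall : a % 2 = 0 ∧ b % 2 = 0 ∧ c % 2 = 0 := by
      rcases ha with ⟨h1, h1'⟩ | ⟨h1, h1'⟩ <;> rcases hb with ⟨h2, h2'⟩ | ⟨h2, h2'⟩ <;>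
        rcases hc with ⟨h3, h3'⟩ | ⟨h3, h3'⟩ <;> omega
    obtain ⟨a', ha'⟩ : ∃ v, a = 2*v := ⟨a/2, by omega⟩
    obtain ⟨b', hb'⟩ : ∃ v, b = 2*v := ⟨b/2, by omega⟩
    obtain ⟨c', hc'⟩ : ∃ v, c = 2*v := ⟨c/2, by omega⟩
    refine IH k ⟨a', b', c', ?_⟩
    have : 4*(a'^2 + b'^2 + c'^2) = 4*(4^t*(8*k+7)) := by
      rw [← h4, ha', hb', hc']; ring
    linarith

/-! ### power of 4 extraction and scaling -/

lemma s3_scale (t : ℕ) (m : ℤ) (h : S3 m) : S3 ((4:ℤ)^t * m) := by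
  obtain ⟨a, b, c, h⟩ := h
  refine ⟨2^t * a, 2^t * b, 2^t * c, ?_⟩
  have h4 : ((4:ℤ))^t = (2^t)^2 := by
    rw [show (4:ℤ) = 2^2 by norm_num, ← pow_mul, ← pow_mul, Nat.mul_comm]
  rw [h4, ← h]; ring

lemma extract4 : ∀ m : ℕ, 1 ≤ m → ∃ t m' : ℕ, m = 4^t * m' ∧ m' % 4 ≠ 0 := by
  intro m
  induction m using Nat.strong_induction_on with
  | _ m IH =>
    intro hm
    by_cases h4 : m % 4 = 0
    · obtain ⟨m₁, hm₁⟩ : ∃ v, m = 4*v := ⟨m/4, by omega⟩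
      obtain ⟨t, m', h1, h2⟩ := IH m₁ (by omega) (by omega)
      exact ⟨t+1, m', by rw [hm₁, h1]; ring, h2⟩
    · exact ⟨0, m, by simp, h4⟩

theorem stmt_7 (n : ℕ) (hn : 0 < n) :
    (¬ ∃ x y z : ℤ, x ^ 2 + 2 * y ^ 2 + 4 * z ^ 2 = (n : ℤ)) ↔
      ∃ d u : ℕ, Odd d ∧ u % 8 = 7 ∧ n = 2 ^ d * u := by
  constructor
  · intro hnot
    by_contra hex
    apply hnot
    rw [form_iff_s3]
    obtain ⟨t, m', hm, h4⟩ := extract4 (2*n) (by omega)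
    have hm1 : 1 ≤ m' := by
      rcases Nat.eq_zero_or_pos m' with h | h
      · rw [h, mul_zero] at hm; omega
      · exact h
    have h7 : m' % 8 ≠ 7 := by
      intro h7
      apply hex
      have hodd : m' % 2 = 1 := by omega
      have ht1 : 1 ≤ t := by
        rcases Nat.eq_zero_or_pos t with h0 | h
        · rw [h0, pow_zero, one_mul] at hm; omega
        · exact h
      refine ⟨2*t - 1, m', ⟨t-1, by omega⟩, h7, ?_⟩
      have e1 : (2:ℕ)*n = 2^(2*t) * m' := by
        rw [hm, show (4:ℕ) = 2^2 by norm_num, ← pow_mul]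
      have e2 : (2:ℕ)^(2*t) = 2 * 2^(2*t-1) := by
        rw [← pow_succ']
        congr 1
        omega
      rw [e2, mul_assoc] at e1
      exact Nat.eq_of_mul_eq_mul_left (by norm_num) e1
    have h8 : m' % 8 = 1 ∨ m' % 8 = 2 ∨ m' % 8 = 3 ∨ m' % 8 = 5 ∨ m' % 8 = 6 := by omega
    have hs : S3 ((4:ℤ)^t * m') := s3_scale t _ (main_s3 m' hm1 h8)
    have ecast : 2*(n:ℤ) = (4:ℤ)^t * (m' : ℤ) := by exact_mod_cast congrArg (Nat.cast : ℕ → ℤ) hm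
    rwa [ecast]
  · rintro ⟨d, u, ⟨e, he⟩, h7, hnd⟩ ⟨x, y, z, hrep⟩
    have hs3 : S3 (2*(n:ℤ)) := (form_iff_s3 (n:ℤ)).mp ⟨x, y, z, by linarith [hrep]⟩
    obtain ⟨k, hk⟩ : ∃ k, u = 8*k+7 := ⟨u/8, by omega⟩
    apply no_s3 (e+1) k
    have hnat : (2:ℕ)*n = 4^(e+1) * (8*k+7) := by
      rw [hnd, hk, he, show (4:ℕ) = 2^2 by norm_num, ← pow_mul]
      ring
    have : ((4:ℤ))^(e+1) * (8*(k:ℤ)+7) = 2*(n:ℤ) := by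
      rw [show ((4:ℤ))^(e+1) * (8*(k:ℤ)+7) = (((4^(e+1) * (8*k+7) : ℕ) : ℤ)) by push_cast; ring,
        ← hnat]
      push_cast
      ring
    rwa [this]
end

section
/- The Hermitian lattice ⟨1,1,1⟩ over ℚ(√−15) is universal: the integral quadratic form x₁² + x₁x₂ + 4x₂² + y₁² + y₁y₂ + 4y₂² + z₁² + z₁z₂ + 4z₂² in six integer variables represents every positive integer. -/
set_option maxHeartbeats 1600000

/-- binary quadratic form value -/
def B2 (a b c x y : ℤ) : ℤ := a*x^2 + 2*b*x*y + c*y^2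

/-- ternary quadratic form value -/
def F3 (a b c d e f x y z : ℤ) : ℤ :=
  a*x^2 + b*y^2 + c*z^2 + 2*d*x*y + 2*e*x*z + 2*f*y*z

lemma inv2 (p q r s : ℤ) (h : p*s - q*r = 1) (X Y : ℤ) :
    ∃ x y : ℤ, p*x + q*y = X ∧ r*x + s*y = Y :=
  ⟨s*X - q*Y, -(r*X) + p*Y, by linear_combination X*h, by linear_combination Y*h⟩

lemma inv3 (p q r s t u v w o ε : ℤ) (hε : ε^2 = 1)
    (hdet : p*(t*o - u*w) - q*(s*o - u*v) + r*(s*w - t*v) = ε) (X Y Z : ℤ) :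
    ∃ x y z : ℤ, p*x + q*y + r*z = X ∧ s*x + t*y + u*z = Y ∧ v*x + w*y + o*z = Z := by
  refine ⟨ε*((t*o - u*w)*X - (q*o - r*w)*Y + (q*u - r*t)*Z),
          ε*(-(s*o - u*v)*X + (p*o - r*v)*Y - (p*u - r*s)*Z),
          ε*((s*w - t*v)*X - (p*w - q*v)*Y + (p*t - q*s)*Z), ?_, ?_, ?_⟩
  · linear_combination X*ε*hdet + X*hε
  · linear_combination Y*ε*hdet + Y*hε
  · linear_combination Z*ε*hdet + Z*hε

lemma argzero3 (p q r s t u v w o ε X Y Z : ℤ) (hε : ε^2 = 1)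
    (hdet : p*(t*o - u*w) - q*(s*o - u*v) + r*(s*w - t*v) = ε)
    (h1 : p*X + q*Y + r*Z = 0) (h2 : s*X + t*Y + u*Z = 0) (h3 : v*X + w*Y + o*Z = 0) :
    X = 0 ∧ Y = 0 ∧ Z = 0 := by
  refine ⟨?_, ?_, ?_⟩
  · linear_combination ε*(t*o - u*w)*h1 - ε*(q*o - r*w)*h2 + ε*(q*u - r*t)*h3
      - ε*X*hdet - X*hε
  · linear_combination (-ε*(s*o - u*v))*h1 + ε*(p*o - r*v)*h2 - ε*(p*u - r*s)*h3
      - ε*Y*hdet - Y*hε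
  · linear_combination ε*(s*w - t*v)*h1 - ε*(p*w - q*v)*h2 + ε*(p*t - q*s)*h3
      - ε*Z*hdet - Z*hε

lemma roundlem (b m : ℤ) (hm : 0 < m) : ∃ k : ℤ, -m ≤ 2*(b + k*m) ∧ 2*(b + k*m) ≤ m := by
  have h1 : b % m = b - m * (b / m) := Int.emod_def b m
  have h2 : 0 ≤ b % m := Int.emod_nonneg b (ne_of_gt hm)
  have h3 : b % m < m := Int.emod_lt_of_pos b hm
  have e1 : (-(b / m)) * m = -(m * (b/m)) := by ring
  have e2 : (-(b / m) - 1) * m = -(m * (b/m)) - m := by ring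
  by_cases h : 2*(b % m) ≤ m
  · exact ⟨-(b / m), by omega, by omega⟩
  · exact ⟨-(b / m) - 1, by omega, by omega⟩

lemma min2 (a b c : ℤ) (hpos : ∀ x y : ℤ, ¬(x = 0 ∧ y = 0) → 0 < B2 a b c x y) :
    ∃ x y : ℤ, ¬(x = 0 ∧ y = 0) ∧
      (∀ u v : ℤ, ¬(u = 0 ∧ v = 0) → B2 a b c x y ≤ B2 a b c u v) := by
  set S : Set ℕ := {k | ∃ x y : ℤ, ¬(x = 0 ∧ y = 0) ∧ B2 a b c x y = k} with hS
  have hne : S.Nonempty := by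
    refine ⟨(B2 a b c 1 0).toNat, 1, 0, by simp, ?_⟩
    rw [Int.toNat_of_nonneg (hpos 1 0 (by simp)).le]
  obtain ⟨x, y, hxy, hval⟩ := Nat.sInf_mem hne
  refine ⟨x, y, hxy, fun u v huv => ?_⟩
  have h1 : (B2 a b c u v).toNat ∈ S := by
    refine ⟨u, v, huv, ?_⟩
    rw [Int.toNat_of_nonneg (hpos u v huv).le]
  have h2 := Nat.sInf_le h1
  have h3 := (hpos u v huv).le
  omega

lemma min3 (a b c d e f : ℤ)
    (hpos : ∀ x y z : ℤ, ¬(x = 0 ∧ y = 0 ∧ z = 0) → 0 < F3 a b c d e f x y z) :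
    ∃ x y z : ℤ, ¬(x = 0 ∧ y = 0 ∧ z = 0) ∧
      (∀ u v w : ℤ, ¬(u = 0 ∧ v = 0 ∧ w = 0) →
        F3 a b c d e f x y z ≤ F3 a b c d e f u v w) := by
  set S : Set ℕ := {k | ∃ x y z : ℤ, ¬(x = 0 ∧ y = 0 ∧ z = 0) ∧ F3 a b c d e f x y z = k}
    with hS
  have hne : S.Nonempty := by
    refine ⟨(F3 a b c d e f 1 0 0).toNat, 1, 0, 0, by simp, ?_⟩
    rw [Int.toNat_of_nonneg (hpos 1 0 0 (by simp)).le]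
  obtain ⟨x, y, z, hxy, hval⟩ := Nat.sInf_mem hne
  refine ⟨x, y, z, hxy, fun u v w huv => ?_⟩
  have h1 : (F3 a b c d e f u v w).toNat ∈ S := by
    refine ⟨u, v, w, huv, ?_⟩
    rw [Int.toNat_of_nonneg (hpos u v w huv).le]
  have h2 := Nat.sInf_le h1
  have h3 := (hpos u v w huv).le
  omega
lemma B2_transport (a b c p q r s X Y : ℤ) :
    B2 a b c (p*X + q*Y) (r*X + s*Y)
      = B2 (B2 a b c p r) (a*p*q + b*(p*s + q*r) + c*r*s) (B2 a b c q s) X Y := by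
  unfold B2; ring

lemma B2_det_transport (a b c p q r s : ℤ) :
    (B2 a b c p r) * (B2 a b c q s) - (a*p*q + b*(p*s + q*r) + c*r*s)^2
      = (a*c - b^2)*(p*s - q*r)^2 := by
  unfold B2; ring

lemma gcd_one_of_min2 (a b c x y : ℤ) (hxy : ¬(x = 0 ∧ y = 0))
    (hmin : ∀ u v : ℤ, ¬(u = 0 ∧ v = 0) → B2 a b c x y ≤ B2 a b c u v)
    (hpos : ∀ u v : ℤ, ¬(u = 0 ∧ v = 0) → 0 < B2 a b c u v) :
    Int.gcd x y = 1 := by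
  obtain ⟨g, hgdef⟩ : ∃ g:ℕ, g = Int.gcd x y := ⟨_, rfl⟩
  have hg0 : g ≠ 0 := fun h => hxy (Int.gcd_eq_zero_iff.mp (by omega))
  have hdx : ((g : ℤ)) ∣ x := hgdef ▸ Int.gcd_dvd_left x y
  have hdy : ((g : ℤ)) ∣ y := hgdef ▸ Int.gcd_dvd_right x y
  obtain ⟨x1, hx1⟩ := hdx
  obtain ⟨y1, hy1⟩ := hdy
  have hxy1 : ¬(x1 = 0 ∧ y1 = 0) := by
    rintro ⟨h1, h2⟩; exact hxy ⟨by rw [hx1, h1, mul_zero], by rw [hy1, h2, mul_zero]⟩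
  have hval : B2 a b c x y = ((g : ℤ))^2 * B2 a b c x1 y1 := by
    rw [hx1, hy1]; unfold B2; ring
  have h1 := hmin x1 y1 hxy1
  have h2 := hpos x1 y1 hxy1
  have h3 := hpos x y hxy
  have hgg : (1:ℤ) ≤ ((g : ℤ)) := by exact_mod_cast Nat.one_le_iff_ne_zero.mpr hg0
  have hh : g = 1 := by nlinarith [sq_nonneg ((g:ℤ) - 1), sq_nonneg ((g:ℤ) + 1)]
  omega

lemma bin_reduce (a b c : ℤ) (hpos : ∀ x y : ℤ, ¬(x = 0 ∧ y = 0) → 0 < B2 a b c x y) :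
    ∃ p q r s m bb cc : ℤ,
      p*s - q*r = 1 ∧
      (∀ X Y : ℤ, B2 a b c (p*X + q*Y) (r*X + s*Y) = B2 m bb cc X Y) ∧
      0 < m ∧ 4*bb^2 ≤ m^2 ∧ m ≤ cc ∧ m*cc - bb^2 = a*c - b^2 ∧
      (∀ u v : ℤ, ¬(u = 0 ∧ v = 0) → m ≤ B2 a b c u v) ∧
      (∃ u v : ℤ, ¬(u = 0 ∧ v = 0) ∧ B2 a b c u v = m) := by
  obtain ⟨x, y, hxy, hmin⟩ := min2 a b c hpos
  have hgcd := gcd_one_of_min2 a b c x y hxy hmin hpos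
  have hbez := Int.gcd_eq_gcd_ab x y
  rw [hgcd] at hbez
  have hm0 : 0 < B2 a b c x y := hpos x y hxy
  obtain ⟨k, hk1, hk2⟩ :=
    roundlem (a*x*(-(Int.gcdB x y)) + b*(x*(Int.gcdA x y) + (-(Int.gcdB x y))*y)
      + c*y*(Int.gcdA x y)) (B2 a b c x y) hm0
  refine ⟨x, x*k + -(Int.gcdB x y), y, y*k + Int.gcdA x y, B2 a b c x y,
    a*x*(x*k + -(Int.gcdB x y)) + b*(x*(y*k + Int.gcdA x y) + (x*k + -(Int.gcdB x y))*y)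
      + c*y*(y*k + Int.gcdA x y),
    B2 a b c (x*k + -(Int.gcdB x y)) (y*k + Int.gcdA x y),
    ?_, ?_, hm0, ?_, ?_, ?_, fun u v huv => hmin u v huv, x, y, hxy, rfl⟩
  · linear_combination hbez.symm
  · intro X Y; exact B2_transport a b c x (x*k + -(Int.gcdB x y)) y (y*k + Int.gcdA x y) X Y
  · have heq : a*x*(x*k + -(Int.gcdB x y)) + b*(x*(y*k + Int.gcdA x y)
        + (x*k + -(Int.gcdB x y))*y) + c*y*(y*k + Int.gcdA x y)
        = (a*x*(-(Int.gcdB x y)) + b*(x*(Int.gcdA x y) + (-(Int.gcdB x y))*y)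
          + c*y*(Int.gcdA x y)) + k*(B2 a b c x y) := by unfold B2; ring
    rw [heq]
    nlinarith [hk1, hk2]
  · have hne : ¬(x*k + -(Int.gcdB x y) = 0 ∧ y*k + Int.gcdA x y = 0) := by
      rintro ⟨h1, h2⟩
      have : (1:ℤ) = 0 := by linear_combination hbez + x*h2 - y*h1
      exact absurd this one_ne_zero
    exact hmin _ _ hne
  · have h := B2_det_transport a b c x (x*k + -(Int.gcdB x y)) y (y*k + Int.gcdA x y)
    have hdet1 : x*(y*k + Int.gcdA x y) - (x*k + -(Int.gcdB x y))*y = 1 := by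
      linear_combination hbez.symm
    rw [hdet1] at h
    linear_combination h

lemma B2_ne_zero_vec (bb : ℤ) : ¬((1:ℤ) = 0 ∧ bb = 0) := fun h => one_ne_zero h.1

lemma bin_squares (a b c : ℤ) (hpos : ∀ x y : ℤ, ¬(x = 0 ∧ y = 0) → 0 < B2 a b c x y)
    (hdet : a*c - b^2 = 1) :
    ∀ X Y : ℤ, ∃ u v : ℤ, u^2 + v^2 = B2 a b c X Y := by
  obtain ⟨p, q, r, s, m, bb, cc, hPdet, hId, hm0, hbb, hcc, hD, hminv, -⟩ := bin_reduce a b c hpos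
  rw [hdet] at hD
  -- 4*(m*cc) - 4*bb^2 = 4 ; m ≤ cc ; so 3m^2 ≤ 4, m = 1
  have hm1 : m = 1 := by nlinarith [hbb, hcc, hD, hm0]
  have hbb0 : bb = 0 := by
    rw [hm1] at hbb
    nlinarith [sq_nonneg bb, hbb]
  have hcc1 : cc = 1 := by rw [hm1, hbb0] at hD; linarith
  intro X Y
  obtain ⟨x, y, h1, h2⟩ := inv2 p q r s hPdet X Y
  refine ⟨x, y, ?_⟩
  have := hId x y
  rw [h1, h2, hm1, hbb0, hcc1] at this
  rw [this]; unfold B2; ring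
/-- polarization of ternary form -/
def P3 (a b c d e f u1 u2 u3 v1 v2 v3 : ℤ) : ℤ :=
  a*u1*v1 + b*u2*v2 + c*u3*v3 + d*(u1*v2 + u2*v1) + e*(u1*v3 + u3*v1) + f*(u2*v3 + u3*v2)

lemma F3_transport (a b c d e f p q r s t u v w o X Y Z : ℤ) :
    F3 a b c d e f (p*X + q*Y + r*Z) (s*X + t*Y + u*Z) (v*X + w*Y + o*Z)
      = F3 (F3 a b c d e f p s v) (F3 a b c d e f q t w) (F3 a b c d e f r u o)
           (P3 a b c d e f p s v q t w) (P3 a b c d e f p s v r u o)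
           (P3 a b c d e f q t w r u o) X Y Z := by
  unfold F3 P3; ring

lemma F3_det_transport (a b c d e f p q r s t u v w o : ℤ) :
    (F3 a b c d e f p s v) * (F3 a b c d e f q t w) * (F3 a b c d e f r u o)
      + 2 * (P3 a b c d e f p s v q t w) * (P3 a b c d e f p s v r u o)
          * (P3 a b c d e f q t w r u o)
      - (F3 a b c d e f p s v) * (P3 a b c d e f q t w r u o)^2
      - (F3 a b c d e f q t w) * (P3 a b c d e f p s v r u o)^2
      - (F3 a b c d e f r u o) * (P3 a b c d e f p s v q t w)^2
      = (a*b*c + 2*d*e*f - a*f^2 - b*e^2 - c*d^2)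
        * (p*(t*o - u*w) - q*(s*o - u*v) + r*(s*w - t*v))^2 := by
  unfold F3 P3; ring

lemma gcd_one_of_min3 (a b c d e f x y z : ℤ) (hxyz : ¬(x = 0 ∧ y = 0 ∧ z = 0))
    (hmin : ∀ u v w : ℤ, ¬(u = 0 ∧ v = 0 ∧ w = 0) →
      F3 a b c d e f x y z ≤ F3 a b c d e f u v w)
    (hpos : ∀ u v w : ℤ, ¬(u = 0 ∧ v = 0 ∧ w = 0) → 0 < F3 a b c d e f u v w) :
    Int.gcd (Int.gcd x y : ℤ) z = 1 := by
  obtain ⟨g, hgdef⟩ : ∃ g:ℕ, g = Int.gcd (Int.gcd x y : ℤ) z := ⟨_, rfl⟩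
  have hg0 : g ≠ 0 := by
    intro h
    rw [h] at hgdef
    have h2 := Int.gcd_eq_zero_iff.mp hgdef.symm
    have h3 := Int.gcd_eq_zero_iff.mp (by exact_mod_cast h2.1)
    exact hxyz ⟨h3.1, h3.2, h2.2⟩
  have hdx : ((g : ℤ)) ∣ x :=
    dvd_trans (hgdef ▸ Int.gcd_dvd_left (Int.gcd x y : ℤ) z) (Int.gcd_dvd_left x y)
  have hdy : ((g : ℤ)) ∣ y :=
    dvd_trans (hgdef ▸ Int.gcd_dvd_left (Int.gcd x y : ℤ) z) (Int.gcd_dvd_right x y)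
  have hdz : ((g : ℤ)) ∣ z := hgdef ▸ Int.gcd_dvd_right (Int.gcd x y : ℤ) z
  obtain ⟨x1, hx1⟩ := hdx
  obtain ⟨y1, hy1⟩ := hdy
  obtain ⟨z1, hz1⟩ := hdz
  have hxyz1 : ¬(x1 = 0 ∧ y1 = 0 ∧ z1 = 0) := by
    rintro ⟨h1, h2, h3⟩
    exact hxyz ⟨by rw [hx1, h1, mul_zero], by rw [hy1, h2, mul_zero], by rw [hz1, h3, mul_zero]⟩
  have hval : F3 a b c d e f x y z = ((g : ℤ))^2 * F3 a b c d e f x1 y1 z1 := by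
    rw [hx1, hy1, hz1]; unfold F3; ring
  have h1 := hmin x1 y1 z1 hxyz1
  have h2 := hpos x1 y1 z1 hxyz1
  have h3 := hpos x y z hxyz
  have hgg : (1:ℤ) ≤ ((g : ℤ)) := by exact_mod_cast Nat.one_le_iff_ne_zero.mpr hg0
  have hh : g = 1 := by nlinarith [sq_nonneg ((g:ℤ) - 1), sq_nonneg ((g:ℤ) + 1)]
  rw [← hgdef, hh]

lemma ext3 (x y z : ℤ) (hprim : Int.gcd (Int.gcd x y : ℤ) z = 1) :
    ∃ q r t u w o ε : ℤ, ε^2 = 1 ∧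
      x*(t*o - u*w) - q*(y*o - u*z) + r*(y*w - t*z) = ε := by
  by_cases hg : Int.gcd x y = 0
  · have h2 := Int.gcd_eq_zero_iff.mp hg
    rw [hg] at hprim
    have hz : z = 1 ∨ z = -1 := by
      have : z.natAbs = 1 := by simpa [Int.gcd] using hprim
      omega
    refine ⟨1, 0, 0, 1, 0, 0, z, ?_, ?_⟩
    · rcases hz with h | h <;> rw [h] <;> ring
    · rw [h2.1, h2.2]; ring
  · obtain ⟨g, hgdef⟩ : ∃ g:ℤ, g = (Int.gcd x y : ℤ) := ⟨_, rfl⟩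
    obtain ⟨A, hA⟩ : ∃ A:ℤ, A = Int.gcdA x y := ⟨_, rfl⟩
    obtain ⟨B, hB⟩ : ∃ B:ℤ, B = Int.gcdB x y := ⟨_, rfl⟩
    obtain ⟨u', hu'⟩ : ∃ u':ℤ, u' = Int.gcdA ((Int.gcd x y : ℤ)) z := ⟨_, rfl⟩
    obtain ⟨w', hw'⟩ : ∃ w':ℤ, w' = Int.gcdB ((Int.gcd x y : ℤ)) z := ⟨_, rfl⟩
    have hbez1 : g = x * A + y * B := by rw [hgdef, hA, hB]; exact Int.gcd_eq_gcd_ab x y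
    have hbez2 : (1:ℤ) = g * u' + z * w' := by
      rw [hgdef, hu', hw']
      have := Int.gcd_eq_gcd_ab ((Int.gcd x y : ℤ)) z
      rw [hprim] at this
      exact_mod_cast this
    have hdx : g ∣ x := hgdef ▸ Int.gcd_dvd_left x y
    have hdy : g ∣ y := hgdef ▸ Int.gcd_dvd_right x y
    obtain ⟨x1, hx1⟩ := hdx
    obtain ⟨y1, hy1⟩ := hdy
    have hgne : g ≠ 0 := by rw [hgdef]; exact_mod_cast hg
    have key1 : x1 * A + y1 * B = 1 := by
      apply mul_left_cancel₀ hgne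
      rw [mul_one]
      calc g * (x1 * A + y1 * B) = (g * x1) * A + (g * y1) * B := by ring
        _ = x * A + y * B := by rw [← hx1, ← hy1]
        _ = g := hbez1.symm
    refine ⟨-B, -w'*x1, A, -w'*y1, 0, u', 1, one_pow 2, ?_⟩
    rw [hx1, hy1]
    linear_combination (g*u' + z*w') * key1 - hbez2
theorem ternary_squares (a b c d e f : ℤ)
    (hpos : ∀ x y z : ℤ, ¬(x = 0 ∧ y = 0 ∧ z = 0) → 0 < F3 a b c d e f x y z)
    (hdet : a*b*c + 2*d*e*f - a*f^2 - b*e^2 - c*d^2 = 1) :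
    ∀ X Y Z : ℤ, ∃ r s t : ℤ, r^2 + s^2 + t^2 = F3 a b c d e f X Y Z := by
  obtain ⟨x, y, z, hxyz, hmin⟩ := min3 a b c d e f hpos
  have hprim := gcd_one_of_min3 a b c d e f x y z hxyz hmin hpos
  obtain ⟨q, r, t, u, w, o, ε, hε, hPdet⟩ := ext3 x y z hprim
  obtain ⟨m, hm⟩ : ∃ m:ℤ, m = F3 a b c d e f x y z := ⟨_, rfl⟩
  obtain ⟨b1, hb1⟩ : ∃ b1:ℤ, b1 = F3 a b c d e f q t w := ⟨_, rfl⟩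
  obtain ⟨c1, hc1⟩ : ∃ c1:ℤ, c1 = F3 a b c d e f r u o := ⟨_, rfl⟩
  obtain ⟨d1, hd1⟩ : ∃ d1:ℤ, d1 = P3 a b c d e f x y z q t w := ⟨_, rfl⟩
  obtain ⟨e1, he1⟩ : ∃ e1:ℤ, e1 = P3 a b c d e f x y z r u o := ⟨_, rfl⟩
  obtain ⟨f1, hf1⟩ : ∃ f1:ℤ, f1 = P3 a b c d e f q t w r u o := ⟨_, rfl⟩
  have hm0 : 0 < m := hm ▸ hpos x y z hxyz
  have hId : ∀ X Y Z : ℤ,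
      F3 a b c d e f (x*X + q*Y + r*Z) (y*X + t*Y + u*Z) (z*X + w*Y + o*Z)
        = F3 m b1 c1 d1 e1 f1 X Y Z := by
    intro X Y Z
    rw [hm, hb1, hc1, hd1, he1, hf1]
    exact F3_transport a b c d e f x q r y t u z w o X Y Z
  have hargzero : ∀ X Y Z : ℤ, ¬(X = 0 ∧ Y = 0 ∧ Z = 0) →
      ¬(x*X + q*Y + r*Z = 0 ∧ y*X + t*Y + u*Z = 0 ∧ z*X + w*Y + o*Z = 0) := by
    intro X Y Z hn hc
    exact hn (argzero3 x q r y t u z w o ε X Y Z hε hPdet hc.1 hc.2.1 hc.2.2)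
  have hmin1 : ∀ X Y Z : ℤ, ¬(X = 0 ∧ Y = 0 ∧ Z = 0) →
      m ≤ F3 m b1 c1 d1 e1 f1 X Y Z := by
    intro X Y Z hn
    rw [← hId X Y Z, hm]
    exact hmin _ _ _ (hargzero X Y Z hn)
  have hD1 : m*b1*c1 + 2*d1*e1*f1 - m*f1^2 - b1*e1^2 - c1*d1^2 = 1 := by
    rw [hm, hb1, hc1, hd1, he1, hf1]
    have h := F3_det_transport a b c d e f x q r y t u z w o
    rw [hdet, hPdet, hε] at h
    linear_combination h
  -- the complementary binary form H
  have hkey : ∀ k Y Z : ℤ, m * F3 m b1 c1 d1 e1 f1 k Y Z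
      = (m*k + d1*Y + e1*Z)^2 + B2 (m*b1 - d1^2) (m*f1 - d1*e1) (m*c1 - e1^2) Y Z := by
    intro k Y Z; unfold F3 B2; ring
  have hHlow : ∀ Y Z : ℤ, ¬(Y = 0 ∧ Z = 0) →
      3*m^2 ≤ 4 * B2 (m*b1 - d1^2) (m*f1 - d1*e1) (m*c1 - e1^2) Y Z := by
    intro Y Z hYZ
    obtain ⟨k, hk1, hk2⟩ := roundlem (d1*Y + e1*Z) m hm0
    have h1 : m ≤ F3 m b1 c1 d1 e1 f1 k Y Z := hmin1 k Y Z (by tauto)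
    have h2 := hkey k Y Z
    have hsq : 4*(m*k + d1*Y + e1*Z)^2 ≤ m^2 := by nlinarith [hk1, hk2]
    nlinarith [h1, h2, hm0, hsq]
  have hHpos : ∀ Y Z : ℤ, ¬(Y = 0 ∧ Z = 0) →
      0 < B2 (m*b1 - d1^2) (m*f1 - d1*e1) (m*c1 - e1^2) Y Z := by
    intro Y Z hYZ
    have := hHlow Y Z hYZ
    nlinarith [hm0]
  have hHdet : (m*b1 - d1^2)*(m*c1 - e1^2) - (m*f1 - d1*e1)^2 = m := by
    have h : (m*b1 - d1^2)*(m*c1 - e1^2) - (m*f1 - d1*e1)^2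
        = m*(m*b1*c1 + 2*d1*e1*f1 - m*f1^2 - b1*e1^2 - c1*d1^2) := by ring
    rw [h, hD1, mul_one]
  obtain ⟨p2, q2, r2, s2, mH, bbH, ccH, hdet2, hId2, hmH0, hbbH, hccH, hDH, hminH,
    uH, vH, huvH, hvalH⟩ := bin_reduce _ _ _ hHpos
  rw [hHdet] at hDH
  have bound1 : 3*mH^2 ≤ 4*m := by nlinarith [hbbH, hccH, hDH, hmH0]
  have bound2 : 3*m^2 ≤ 4*mH := by
    have := hHlow uH vH huvH
    rw [hvalH] at this; exact this
  have hm1 : m = 1 := by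
    have hsq9 : 9*m^4 ≤ 16*mH^2 := by nlinarith [bound2, hm0, hmH0]
    have h27 : 27*m^3 ≤ 64 := by
      have h1 : 27*m^4 ≤ 64*m := by nlinarith [hsq9, bound1]
      have h2 : (27*m^3)*m ≤ 64*m := by nlinarith [h1]
      exact le_of_mul_le_mul_right h2 hm0
    by_contra h
    have h2m : 2 ≤ m := by omega
    have t1 : 0 ≤ (m-2)*m^2 := mul_nonneg (by omega) (sq_nonneg m)
    have t2 : 0 ≤ (m-2)*m := mul_nonneg (by omega) (by omega)
    nlinarith [t1, t2, h2m]
  rw [hm1] at hId hmin1 hD1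
  -- clearing the first row
  have hI3 : ∀ X Y Z : ℤ, F3 1 b1 c1 d1 e1 f1 (X - d1*Y - e1*Z) Y Z
      = X^2 + B2 (b1 - d1^2) (f1 - d1*e1) (c1 - e1^2) Y Z := by
    intro X Y Z; unfold F3 B2; ring
  have hGpos : ∀ Y Z : ℤ, ¬(Y = 0 ∧ Z = 0) →
      0 < B2 (b1 - d1^2) (f1 - d1*e1) (c1 - e1^2) Y Z := by
    intro Y Z hYZ
    have h := hI3 0 Y Z
    have h2 : (1:ℤ) ≤ F3 1 b1 c1 d1 e1 f1 (0 - d1*Y - e1*Z) Y Z := hmin1 _ _ _ (by tauto)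
    nlinarith [h, h2]
  have hGdet : (b1 - d1^2)*(c1 - e1^2) - (f1 - d1*e1)^2 = 1 := by linear_combination hD1
  have hGsq := bin_squares _ _ _ hGpos hGdet
  intro X Y Z
  obtain ⟨xx, yy, zz, he1', he2', he3'⟩ := inv3 x q r y t u z w o ε hε hPdet X Y Z
  have hv : F3 a b c d e f X Y Z = F3 1 b1 c1 d1 e1 f1 xx yy zz := by
    rw [← he1', ← he2', ← he3']; exact hId xx yy zz
  have hI3' := hI3 (xx + d1*yy + e1*zz) yy zz
  rw [show (xx + d1*yy + e1*zz) - d1*yy - e1*zz = xx by ring] at hI3'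
  obtain ⟨uu, vv, huv⟩ := hGsq yy zz
  exact ⟨xx + d1*yy + e1*zz, uu, vv, by rw [hv, hI3', ← huv]; ring⟩
lemma cop_tm (t m : ℕ) (h1 : 1 ≤ t*m) : Nat.Coprime (t*m - 1) m := by
  have h2 : Nat.gcd (t*m - 1) m ∣ t*m - 1 := Nat.gcd_dvd_left _ _
  have h3 : Nat.gcd (t*m - 1) m ∣ t*m := Dvd.dvd.mul_left (Nat.gcd_dvd_right _ _) t
  have h4 : Nat.gcd (t*m - 1) m ∣ t*m - (t*m - 1) := Nat.dvd_sub h3 h2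
  rw [show t*m - (t*m - 1) = 1 by omega] at h4
  exact Nat.dvd_one.mp h4

lemma cop8 (x : ℕ) (hx : x % 2 = 1) : Nat.Coprime x 8 := by
  have h2 : Nat.Coprime x 2 := Nat.coprime_two_right.mpr (Nat.odd_iff.mpr hx)
  have := Nat.Coprime.pow_right 3 h2
  simpa using this

lemma jacobi_step (p : ℕ) (dd : ℤ) (n : ℕ)
    (hmod : ((n:ℤ)*dd) % (p:ℤ) = 1 % (p:ℤ))
    (heq : jacobiSym (n:ℤ) p = jacobiSym (-1 : ℤ) p) :
    jacobiSym (-dd) p = 1 := by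
  have h1 : jacobiSym (-dd * n) p = jacobiSym (-1) p := by
    apply jacobiSym.mod_left'
    have h2 : (-(((n:ℤ))*dd)) % (p:ℤ) = (-1:ℤ) % (p:ℤ) := Int.ModEq.neg hmod
    rw [show (-dd*(n:ℤ)) = -((n:ℤ)*dd) by ring]
    exact h2
  rw [jacobiSym.mul_left] at h1
  rw [heq] at h1
  have h2 : jacobiSym (-1:ℤ) p = 1 ∨ jacobiSym (-1:ℤ) p = -1 :=
    jacobiSym.eq_one_or_neg_one (by simp [Int.gcd])
  rcases h2 with h | h <;> rw [h] at h1
  · simpa using h1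
  · linarith [h1]

lemma mk_bc (p : ℕ) (hp : p.Prime) (dd : ℤ) (hJ : jacobiSym (-dd) p = 1) :
    ∃ b c : ℤ, (p:ℤ)*c - b^2 = dd := by
  haveI : Fact p.Prime := ⟨hp⟩
  obtain ⟨β, hβ⟩ : IsSquare ((-dd : ℤ) : ZMod p) :=
    ZMod.isSquare_of_jacobiSym_eq_one hJ
  have hdvd : (p:ℤ) ∣ ((β.val:ℕ):ℤ)^2 + dd := by
    rw [← ZMod.intCast_zmod_eq_zero_iff_dvd]
    push_cast
    rw [ZMod.natCast_val, ZMod.cast_id, sq, ← hβ]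
    push_cast
    ring
  obtain ⟨c, hc⟩ := hdvd
  exact ⟨((β.val:ℕ):ℤ), c, by linarith [hc]⟩

lemma mk_bc2 (p : ℕ) (hp : p.Prime) (hpodd : p % 2 = 1) (dd : ℤ) (hdodd : dd % 2 = 1)
    (hJ : jacobiSym (-dd) p = 1) :
    ∃ b c : ℤ, (2*(p:ℤ))*c - b^2 = dd := by
  haveI : Fact p.Prime := ⟨hp⟩
  obtain ⟨β, hβ⟩ : IsSquare ((-dd : ℤ) : ZMod p) :=
    ZMod.isSquare_of_jacobiSym_eq_one hJ
  have hdvd0 : (p:ℤ) ∣ ((β.val:ℕ):ℤ)^2 + dd := by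
    rw [← ZMod.intCast_zmod_eq_zero_iff_dvd]
    push_cast
    rw [ZMod.natCast_val, ZMod.cast_id, sq, ← hβ]
    push_cast
    ring
  set b0 : ℤ := ((β.val:ℕ):ℤ) with hb0
  have hb0n : 0 ≤ b0 := by positivity
  obtain ⟨b, hbodd, hdvdp⟩ : ∃ b : ℤ, b % 2 = 1 ∧ (p:ℤ) ∣ b^2 + dd := by
    by_cases hpar : b0 % 2 = 1
    · exact ⟨b0, hpar, hdvd0⟩
    · refine ⟨b0 + p, by omega, ?_⟩
      have : (b0 + p)^2 + dd = (b0^2 + dd) + (p:ℤ)*(2*b0 + p) := by ring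
      rw [this]
      exact dvd_add hdvd0 ⟨2*b0 + p, rfl⟩
  have hdvd2 : (2:ℤ) ∣ b^2 + dd := by
    have hb2 : b^2 % 2 = 1 := Int.odd_iff.mp ((Int.odd_iff.mpr hbodd).pow)
    omega
  have hcop : IsCoprime (2:ℤ) ((p:ℕ):ℤ) := by
    rw [Int.isCoprime_iff_gcd_eq_one]
    have h2 : Nat.Coprime 2 p := (Nat.Prime.coprime_iff_not_dvd Nat.prime_two).mpr (by omega)
    have h3 : Int.gcd 2 ((p:ℕ):ℤ) = Nat.gcd 2 p := by
      rw [Int.gcd]; simp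
    rw [h3]; exact h2
  have hdvd : (2*(p:ℤ)) ∣ b^2 + dd := hcop.mul_dvd hdvd2 hdvdp
  obtain ⟨c, hc⟩ := hdvd
  exact ⟨b, c, by linarith [hc]⟩
lemma nathanson (n : ℕ) (h2 : 2 ≤ n) (hmod : n % 4 = 1 ∨ n % 4 = 2 ∨ n % 8 = 3) :
    ∃ d b c : ℤ, 0 < d ∧ ((n:ℤ)*d - 1)*c - b^2 = d := by
  have hn0 : (0:ℤ) < (n:ℤ) := by exact_mod_cast (by omega : 0 < n)
  rcases hmod with h4 | h4 | h8
  · -- case n % 4 = 1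
    have hn5 : 5 ≤ n := by omega
    haveI : NeZero (4*n) := ⟨by omega⟩
    have hcop : Nat.Coprime (2*n - 1) (4*n) := by
      have c2 : Nat.Coprime (2*n-1) 2 := Nat.coprime_two_right.mpr (Nat.odd_iff.mpr (by omega))
      have c4 : Nat.Coprime (2*n-1) 4 := by
        have := Nat.Coprime.pow_right 2 c2
        norm_num at this
        exact this
      exact Nat.Coprime.mul_right c4 (cop_tm 2 n (by omega))
    have hunit : IsUnit ((2*n-1 : ℕ) : ZMod (4*n)) := (ZMod.isUnit_iff_coprime _ _).mpr hcop
    obtain ⟨p, hpgt, hpp, hpmod⟩ := Nat.forall_exists_prime_gt_and_eq_mod hunit (4*n)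
    have hMp : p ≡ 2*n-1 [MOD 4*n] := (ZMod.natCast_eq_natCast_iff _ _ _).mp hpmod
    have hp4 : p % 4 = 1 := by
      have hd4 : p % 4 = (2*n-1) % 4 := Nat.ModEq.of_dvd ⟨n, rfl⟩ hMp
      omega
    have hpodd : Odd p := hpp.odd_of_ne_two (by omega)
    have hdvdn : n ∣ p + 1 := by
      have hn := Nat.ModEq.of_dvd ⟨4, by ring⟩ hMp
      have h1 : (p+1) % n = (2*n-1+1) % n := Nat.ModEq.add_right 1 hn
      have h2' : (2*n-1+1) % n = 0 := by
        rw [show 2*n-1+1 = 2*n by omega]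
        exact Nat.mul_mod_left 2 n
      exact Nat.dvd_of_mod_eq_zero (h1.trans h2')
    have hdvdz : ((n:ℤ)) ∣ (p:ℤ) + 1 := by
      have := Int.natCast_dvd_natCast.mpr hdvdn
      push_cast at this
      exact this
    obtain ⟨dd, hdd⟩ := hdvdz
    have hdd0 : 0 < dd := by nlinarith [hdd, hn0]
    have hJn : jacobiSym ((n:ℕ):ℤ) p = 1 := by
      rw [jacobiSym.quadratic_reciprocity_one_mod_four' (Nat.odd_iff.mpr (by omega)) hp4]
      have hstep : jacobiSym ((p:ℕ):ℤ) n = jacobiSym (-1) n := by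
        apply jacobiSym.mod_left'
        rw [show ((p:ℕ):ℤ) = -1 + (n:ℤ)*dd by linarith [hdd], Int.add_mul_emod_self_left]
      rw [hstep, jacobiSym.at_neg_one (Nat.odd_iff.mpr (by omega)),
        ZMod.χ₄_nat_one_mod_four h4]
    have hJm1 : jacobiSym (-1:ℤ) p = 1 := by
      rw [jacobiSym.at_neg_one hpodd, ZMod.χ₄_nat_one_mod_four hp4]
    have hJ : jacobiSym (-dd) p = 1 := by
      apply jacobi_step p dd n
      · rw [show (n:ℤ)*dd = 1 + (p:ℤ)*1 by linarith [hdd], Int.add_mul_emod_self_left]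
      · rw [hJn, hJm1]
    obtain ⟨b, c, hbc⟩ := mk_bc p hpp dd hJ
    refine ⟨dd, b, c, hdd0, ?_⟩
    rw [show ((n:ℤ)*dd - 1) = (p:ℤ) by linarith [hdd]]
    exact hbc
  · -- case n % 4 = 2
    obtain ⟨m, hm⟩ : ∃ m, n = 2*m := ⟨n/2, by omega⟩
    have hmodd : m % 2 = 1 := by omega
    have hm1 : 1 ≤ m := by omega
    haveI : NeZero (8*m) := ⟨by omega⟩
    -- t = 2 if m % 4 = 1 else 4
    obtain ⟨t, ht24, hx8⟩ : ∃ t, (t = 2 ∧ m % 4 = 1 ∨ t = 4 ∧ m % 4 = 3) ∧ (t*m-1) % 8 = (t*m-1) % 8 := by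
      by_cases hc : m % 4 = 1
      · exact ⟨2, Or.inl ⟨rfl, hc⟩, rfl⟩
      · exact ⟨4, Or.inr ⟨rfl, by omega⟩, rfl⟩
    have htm : 1 ≤ t*m ∧ t*m - 1 ≥ 1 := by rcases ht24 with ⟨h,_⟩|⟨h,_⟩ <;> subst h <;> omega
    have hxodd : (t*m-1) % 2 = 1 := by rcases ht24 with ⟨h,_⟩|⟨h,_⟩ <;> subst h <;> omega
    have hcop : Nat.Coprime (t*m-1) (8*m) :=
      Nat.Coprime.mul_right (cop8 _ hxodd) (cop_tm t m (by omega))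
    have hunit : IsUnit ((t*m-1 : ℕ) : ZMod (8*m)) := (ZMod.isUnit_iff_coprime _ _).mpr hcop
    obtain ⟨p, hpgt, hpp, hpmod⟩ := Nat.forall_exists_prime_gt_and_eq_mod hunit (8*m)
    have hMp : p ≡ t*m-1 [MOD 8*m] := (ZMod.natCast_eq_natCast_iff _ _ _).mp hpmod
    have hp8 : p % 8 = (t*m-1) % 8 := Nat.ModEq.of_dvd ⟨m, rfl⟩ hMp
    have hpodd : Odd p := hpp.odd_of_ne_two (by omega)
    have hpodd' : p % 2 = 1 := Nat.odd_iff.mp hpodd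
    have hdvdm : m ∣ p + 1 := by
      have hn := Nat.ModEq.of_dvd ⟨8, by ring⟩ hMp
      have h1 : (p+1) % m = (t*m-1+1) % m := Nat.ModEq.add_right 1 hn
      have h2' : (t*m-1+1) % m = 0 := by
        rw [show t*m-1+1 = t*m by omega]
        exact Nat.mul_mod_left t m
      exact Nat.dvd_of_mod_eq_zero (h1.trans h2')
    have hdvdn : n ∣ p + 1 := by
      rw [hm]
      have c2m : Nat.Coprime 2 m := (Nat.Prime.coprime_iff_not_dvd Nat.prime_two).mpr (by omega)
      exact c2m.mul_dvd_of_dvd_of_dvd (by omega) hdvdm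
    have hdvdz : ((n:ℤ)) ∣ (p:ℤ) + 1 := by
      have := Int.natCast_dvd_natCast.mpr hdvdn
      push_cast at this
      exact this
    obtain ⟨dd, hdd⟩ := hdvdz
    have hdd0 : 0 < dd := by nlinarith [hdd, hn0]
    -- J(m | p) = 1   in both subcases
    have hJm : jacobiSym ((m:ℕ):ℤ) p = 1 := by
      have hstep : jacobiSym ((p:ℕ):ℤ) m = jacobiSym (-1) m := by
        apply jacobiSym.mod_left'
        have hmdvd : ((m:ℤ)) ∣ (p:ℤ) + 1 := by
          have := Int.natCast_dvd_natCast.mpr hdvdm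
          push_cast at this
          exact this
        obtain ⟨ee, hee⟩ := hmdvd
        rw [show ((p:ℕ):ℤ) = -1 + (m:ℤ)*ee by linarith [hee], Int.add_mul_emod_self_left]
      rcases ht24 with ⟨ht, hm4⟩ | ⟨ht, hm4⟩
      · rw [jacobiSym.quadratic_reciprocity_one_mod_four hm4 hpodd, hstep,
          jacobiSym.at_neg_one (Nat.odd_iff.mpr hmodd), ZMod.χ₄_nat_one_mod_four hm4]
      · have hp4 : p % 4 = 3 := by subst ht; omega
        rw [jacobiSym.quadratic_reciprocity_three_mod_four hm4 hp4, hstep,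
          jacobiSym.at_neg_one (Nat.odd_iff.mpr hmodd), ZMod.χ₄_nat_three_mod_four hm4]
        ring
    -- J(n|p) = J(2|p)*J(m|p) = χ₈ p ; J(-1|p) = χ₄ p ; and χ₈ p = χ₄ p
    have hJn : jacobiSym ((n:ℕ):ℤ) p = jacobiSym (-1:ℤ) p := by
      have hsplit : ((n:ℕ):ℤ) = (2:ℤ) * ((m:ℕ):ℤ) := by rw [hm]; push_cast; ring
      rw [hsplit, jacobiSym.mul_left, hJm, mul_one, jacobiSym.at_two hpodd,
        jacobiSym.at_neg_one hpodd]
      rcases ht24 with ⟨ht, hm4⟩ | ⟨ht, hm4⟩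
      · have hp8' : p % 8 = 1 := by subst ht; omega
        rw [show ZMod.χ₈ ((p:ℕ) : ZMod 8) = 1 by
          rw [ZMod.χ₈_nat_eq_if_mod_eight, if_neg (by omega), if_pos (by omega)]]
        rw [ZMod.χ₄_nat_one_mod_four (by omega)]
      · have hp8' : p % 8 = 3 := by subst ht; omega
        rw [show ZMod.χ₈ ((p:ℕ) : ZMod 8) = -1 by
          rw [ZMod.χ₈_nat_eq_if_mod_eight, if_neg (by omega), if_neg (by omega)]]
        rw [ZMod.χ₄_nat_three_mod_four (by omega)]
    have hJ : jacobiSym (-dd) p = 1 := by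
      apply jacobi_step p dd n
      · rw [show (n:ℤ)*dd = 1 + (p:ℤ)*1 by linarith [hdd], Int.add_mul_emod_self_left]
      · exact hJn
    obtain ⟨b, c, hbc⟩ := mk_bc p hpp dd hJ
    refine ⟨dd, b, c, hdd0, ?_⟩
    rw [show ((n:ℤ)*dd - 1) = (p:ℤ) by linarith [hdd]]
    exact hbc
  · -- case n % 8 = 3
    have hn3 : 3 ≤ n := by omega
    haveI : NeZero (4*n) := ⟨by omega⟩
    -- x = (n-1)/2 ; x % 4 = 1 ; 2*x + 1 = n
    obtain ⟨x, hxdef⟩ : ∃ x, n = 2*x + 1 := ⟨(n-1)/2, by omega⟩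
    have hx4 : x % 4 = 1 := by omega
    have hcop : Nat.Coprime x (4*n) := by
      have c2 : Nat.Coprime x 2 := Nat.coprime_two_right.mpr (Nat.odd_iff.mpr (by omega))
      have c4 : Nat.Coprime x 4 := by
        have := Nat.Coprime.pow_right 2 c2
        norm_num at this
        exact this
      have cn : Nat.Coprime x n := by
        have h2' : Nat.gcd x n ∣ x := Nat.gcd_dvd_left _ _
        have h3 : Nat.gcd x n ∣ n := Nat.gcd_dvd_right _ _
        have h4' : Nat.gcd x n ∣ n - 2*x := Nat.dvd_sub h3 (Dvd.dvd.mul_left h2' 2)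
        rw [show n - 2*x = 1 by omega] at h4'
        exact Nat.dvd_one.mp h4'
      exact Nat.Coprime.mul_right c4 cn
    have hunit : IsUnit ((x : ℕ) : ZMod (4*n)) := (ZMod.isUnit_iff_coprime _ _).mpr hcop
    obtain ⟨p, hpgt, hpp, hpmod⟩ := Nat.forall_exists_prime_gt_and_eq_mod hunit (4*n)
    have hMp : p ≡ x [MOD 4*n] := (ZMod.natCast_eq_natCast_iff _ _ _).mp hpmod
    have hp4 : p % 4 = 1 := by
      have hd4 : p % 4 = x % 4 := Nat.ModEq.of_dvd ⟨n, rfl⟩ hMp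
      omega
    have hpodd : Odd p := hpp.odd_of_ne_two (by omega)
    have hdvdn : n ∣ 2*p + 1 := by
      have hn := Nat.ModEq.of_dvd ⟨4, by ring⟩ hMp
      have h1 : (2*p+1) % n = (2*x+1) % n := by
        have := Nat.ModEq.add_right 1 (Nat.ModEq.mul_left 2 hn)
        exact this
      have h2' : (2*x+1) % n = 0 := by
        rw [← hxdef]
        exact Nat.mod_self n
      exact Nat.dvd_of_mod_eq_zero (h1.trans h2')
    have hdvdz : ((n:ℤ)) ∣ 2*(p:ℤ) + 1 := by
      have := Int.natCast_dvd_natCast.mpr hdvdn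
      push_cast at this
      exact this
    obtain ⟨dd, hdd⟩ := hdvdz
    have hdd0 : 0 < dd := by nlinarith [hdd, hn0]
    have hddodd : dd % 2 = 1 := by
      have hodd : Odd ((n:ℤ)*dd) := ⟨(p:ℤ), by linarith [hdd]⟩
      exact Int.odd_iff.mp (Int.odd_mul.mp hodd).2
    -- J(x | n) computation: J(2|n) * J(x|n) = J(2x|n) = J(-1|n); χ₈ n = -1, χ₄ n = -1
    have hJxn : jacobiSym ((x:ℕ):ℤ) n = 1 := by
      have hnodd : Odd n := Nat.odd_iff.mpr (by omega)
      have h2x : jacobiSym ((2:ℤ) * ((x:ℕ):ℤ)) n = jacobiSym (-1) n := by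
        apply jacobiSym.mod_left'
        rw [show (2:ℤ) * ((x:ℕ):ℤ) = -1 + (n:ℤ)*1 by
          push_cast [hxdef]; ring, Int.add_mul_emod_self_left]
      rw [jacobiSym.mul_left, jacobiSym.at_two hnodd, jacobiSym.at_neg_one hnodd] at h2x
      have e8 : ZMod.χ₈ ((n:ℕ) : ZMod 8) = -1 := by
        rw [ZMod.χ₈_nat_eq_if_mod_eight, if_neg (by omega), if_neg (by omega)]
      have e4 : ZMod.χ₄ ((n:ℕ) : ZMod 4) = -1 := by
        rw [ZMod.χ₄_nat_eq_if_mod_four, if_neg (by omega), if_neg (by omega)]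
      rw [e8, e4] at h2x
      linarith [h2x]
    have hJn : jacobiSym ((n:ℕ):ℤ) p = jacobiSym (-1:ℤ) p := by
      have hnodd : Odd n := Nat.odd_iff.mpr (by omega)
      rw [jacobiSym.quadratic_reciprocity_one_mod_four' hnodd hp4]
      have hstep : jacobiSym ((p:ℕ):ℤ) n = jacobiSym ((x:ℕ):ℤ) n := by
        apply jacobiSym.mod_left'
        have := (Nat.ModEq.of_dvd ⟨4, by ring⟩ hMp)
        have hcast : (p:ℤ) % (n:ℤ) = ((x:ℕ):ℤ) % (n:ℤ) := by
          rw [← Int.natCast_mod, ← Int.natCast_mod]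
          exact_mod_cast congrArg (Nat.cast : ℕ → ℤ) this
        exact hcast
      rw [hstep, hJxn, jacobiSym.at_neg_one hpodd, ZMod.χ₄_nat_one_mod_four hp4]
    have hJ : jacobiSym (-dd) p = 1 := by
      apply jacobi_step p dd n
      · rw [show (n:ℤ)*dd = 1 + (p:ℤ)*2 by linarith [hdd], Int.add_mul_emod_self_left]
      · exact hJn
    obtain ⟨b, c, hbc⟩ := mk_bc2 p hpp (Nat.odd_iff.mp hpodd) dd hddodd hJ
    refine ⟨dd, b, c, hdd0, ?_⟩
    rw [show ((n:ℤ)*dd - 1) = 2*(p:ℤ) by linarith [hdd]]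
    exact hbc
theorem three_squares (n : ℕ) (hmod : n % 4 = 1 ∨ n % 4 = 2 ∨ n % 8 = 3) :
    ∃ x y z : ℤ, x^2 + y^2 + z^2 = (n:ℤ) := by
  by_cases hn1 : n < 2
  · have : n = 1 := by omega
    exact ⟨1, 0, 0, by rw [this]; norm_num⟩
  · obtain ⟨dd, b, c, hdd0, hd⟩ := nathanson n (by omega) hmod
    have hn0 : (2:ℤ) ≤ (n:ℤ) := by exact_mod_cast (by omega : 2 ≤ n)
    have hN0 : 0 < (n:ℤ)*dd - 1 := by nlinarith
    have hc0 : 0 < c := by nlinarith [sq_nonneg b]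
    have key : ∀ x y z : ℤ, dd*c*(F3 c ((n:ℤ)*dd - 1) (n:ℤ) (-b) 1 0 x y z)
        = dd*(c*x - b*y + z)^2 + (dd*y + b*z)^2 + c*z^2 := by
      intro x y z; unfold F3; linear_combination (dd*y^2 + z^2) * hd
    have hpos : ∀ x y z : ℤ, ¬(x = 0 ∧ y = 0 ∧ z = 0) →
        0 < F3 c ((n:ℤ)*dd - 1) (n:ℤ) (-b) 1 0 x y z := by
      intro x y z hne
      by_contra hF
      push_neg at hF
      have hkey := key x y z
      have hsum : dd*(c*x - b*y + z)^2 + (dd*y + b*z)^2 + c*z^2 ≤ 0 := by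
        rw [← hkey]
        exact mul_nonpos_of_nonneg_of_nonpos (by positivity) hF
      have t1 : 0 ≤ dd*(c*x - b*y + z)^2 := by positivity
      have t2 : 0 ≤ (dd*y + b*z)^2 := sq_nonneg _
      have t3 : 0 ≤ c*z^2 := by positivity
      have hz2 : z^2 ≤ 0 := by nlinarith
      have hz : z = 0 := by
        have := le_antisymm hz2 (sq_nonneg z)
        exact sq_eq_zero_iff.mp this
      rw [hz] at hsum
      have hy2 : (dd*y)^2 ≤ 0 := by nlinarith
      have hy : y = 0 := by
        have h1 := le_antisymm hy2 (sq_nonneg _)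
        have h2 : dd*y = 0 := sq_eq_zero_iff.mp h1
        rcases mul_eq_zero.mp h2 with h | h
        · omega
        · exact h
      rw [hy] at hsum
      have hx2 : (c*x)^2 ≤ 0 := by nlinarith
      have hx : x = 0 := by
        have h1 := le_antisymm hx2 (sq_nonneg _)
        have h2 : c*x = 0 := sq_eq_zero_iff.mp h1
        rcases mul_eq_zero.mp h2 with h | h
        · omega
        · exact h
      exact hne ⟨hx, hy, hz⟩
    have hdet : c*((n:ℤ)*dd - 1)*(n:ℤ) + 2*(-b)*1*0 - c*0^2 - ((n:ℤ)*dd - 1)*1^2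
        - (n:ℤ)*(-b)^2 = 1 := by linear_combination (n:ℤ)*hd
    obtain ⟨r, s, t, hrst⟩ := ternary_squares c ((n:ℤ)*dd - 1) (n:ℤ) (-b) 1 0 hpos hdet 0 0 1
    refine ⟨r, s, t, ?_⟩
    rw [hrst]; unfold F3; ring

theorem stmt_16 (n : ℕ) (hn : 0 < n) :
    ∃ x₁ x₂ y₁ y₂ z₁ z₂ : ℤ,
      x₁ ^ 2 + x₁ * x₂ + 4 * x₂ ^ 2 + y₁ ^ 2 + y₁ * y₂ + 4 * y₂ ^ 2 +
        z₁ ^ 2 + z₁ * z₂ + 4 * z₂ ^ 2 = (n : ℤ) := by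
  induction n using Nat.strong_induction_on with
  | _ n ih =>
  by_cases h4 : n % 4 = 0
  · have hn4 : 0 < n / 4 := by omega
    obtain ⟨x₁, x₂, y₁, y₂, z₁, z₂, hv⟩ := ih (n/4) (by omega) hn4
    refine ⟨2*x₁, 2*x₂, 2*y₁, 2*y₂, 2*z₁, 2*z₂, ?_⟩
    have hcast : (n:ℤ) = 4*((n/4 : ℕ):ℤ) := by exact_mod_cast (by omega : n = 4*(n/4))
    rw [hcast]
    linear_combination 4*hv
  · by_cases h8 : n % 8 = 7
    · by_cases hbig : 31 ≤ n
      · obtain ⟨x, y, z, hxyz⟩ := three_squares (n - 30) (Or.inl (by omega))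
        have hcast : ((n-30 : ℕ):ℤ) = (n:ℤ) - 30 := by
          push_cast [Nat.cast_sub (by omega : 30 ≤ n)]
          ring
        rw [hcast] at hxyz
        exact ⟨x - 1, 2, y - 1, 2, z, 0, by linear_combination hxyz⟩
      · have : n = 7 ∨ n = 15 ∨ n = 23 := by omega
        rcases this with h | h | h <;> subst h
        · exact ⟨1, 1, 1, 0, 0, 0, by norm_num⟩
        · exact ⟨-1, 2, 0, 0, 0, 0, by norm_num⟩
        · exact ⟨1, 1, 4, 0, 1, 0, by norm_num⟩
    · have hmod : n % 4 = 1 ∨ n % 4 = 2 ∨ n % 8 = 3 := by omega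
      obtain ⟨x, y, z, hxyz⟩ := three_squares n hmod
      exact ⟨x, 0, y, 0, z, 0, by linear_combination hxyz⟩
end

section
/- The Hermitian lattice ⟨1,1⟩ over ℚ(√−3) is universal: the quadratic form x₁² + x₁x₂ + x₂² + y₁² + y₁y₂ + y₂² in four integer variables represents every positive integer. -/
open Polynomial

namespace Stmt17Aux

def Rep (n : ℤ) : Prop := ∃ a b c d : ℤ, a^2+a*b+b^2+c^2+c*d+d^2 = n

lemma rep_mul {m n : ℤ} (hm : Rep m) (hn : Rep n) : Rep (m * n) := by
  obtain ⟨a,b,c,d,h1⟩ := hm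
  obtain ⟨A,B,C,D,h2⟩ := hn
  exact ⟨a*A+a*B+b*B + c*C+c*D+d*D, b*A-a*B + d*C-c*D,
    c*A - d*B - a*C + b*D, c*B + d*A + d*B - a*D - b*C - b*D, by rw [← h1, ← h2]; ring⟩

lemma N2_nonneg (a b : ℤ) : 0 ≤ a^2+a*b+b^2 := by nlinarith [sq_nonneg (2*a+b), sq_nonneg b]

lemma N2_eq_zero {a b : ℤ} (h : a^2+a*b+b^2 = 0) : a = 0 ∧ b = 0 := by
  constructor <;> nlinarith [sq_nonneg (2*a+b), sq_nonneg b, sq_nonneg a, sq_nonneg (a+2*b)]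

/-- reduce a pair mod m keeping the norm small -/
lemma reduce (m : ℤ) (hm : 0 < m) (a b : ℤ) :
    ∃ a' b' : ℤ, m ∣ a' - a ∧ m ∣ b' - b ∧ 16*(a'^2+a'*b'+b'^2) ≤ 7*m^2 := by
  set r := b % m with hr
  have hr0 : 0 ≤ r := Int.emod_nonneg b hm.ne'
  have hr1 : r < m := Int.emod_lt_of_pos b hm
  set b' := if 2*r ≤ m then r else r - m with hb'
  have hbdvd : m ∣ b' - b := by
    have h1 : m ∣ r - b := by
      rw [hr, Int.emod_def]; exact ⟨-(b/m), by ring⟩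
    rcases le_or_gt (2*r) m with h | h
    · simpa [hb', h] using h1
    · rw [hb', if_neg (not_le.mpr h)]
      obtain ⟨k, hk⟩ := h1
      exact ⟨k - 1, by linarith [hk]⟩
  have hb2 : -m < 2*b' ∧ 2*b' ≤ m := by
    rcases le_or_gt (2*r) m with h | h <;> simp [hb', h] <;> omega
  set t := 2*a + b' with ht
  set k := (t + m) / (2*m) with hk
  set a' := a - m*k with ha'
  have h2m : 0 < 2*m := by omega
  have htm0 : 0 ≤ (t+m) % (2*m) := Int.emod_nonneg _ h2m.ne'
  have htm1 : (t+m) % (2*m) < 2*m := Int.emod_lt_of_pos _ h2m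
  have htmod : (t+m) % (2*m) = t + m - 2*m*k := by
    rw [Int.emod_def]
  have hadvd : m ∣ a' - a := ⟨-k, by rw [ha']; ring⟩
  have ht' : -m ≤ 2*a'+b' ∧ 2*a'+b' < m := by
    have : 2*a'+b' = t - 2*m*k := by rw [ha', ht]; ring
    omega
  refine ⟨a', b', hadvd, hbdvd, ?_⟩
  nlinarith [ht'.1, ht'.2, hb2.1, hb2.2, sq_nonneg (2*a'+b'), sq_nonneg b',
    sq_nonneg ((2*a'+b') - m), sq_nonneg ((2*a'+b') + m), sq_nonneg (2*b' - m), sq_nonneg (2*b' + m)]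

lemma descent (p : ℤ) (hp : Prime p) :
    ∀ k : ℕ, ∀ m : ℤ, m.natAbs ≤ k → 0 < m → m < p → Rep (m * p) → Rep p := by
  intro k
  induction k with
  | zero => intro m hk hm hmp hrep; exfalso; omega
  | succ K ih =>
    intro m hk hm hmp hrep
    rcases eq_or_lt_of_le (show (1:ℤ) ≤ m by omega) with h1 | h1
    · obtain ⟨a,b,c,d,h⟩ := hrep
      exact ⟨a,b,c,d, by rw [h, ← h1, one_mul]⟩
    -- m ≥ 2
    obtain ⟨a,b,c,d,h⟩ := hrep
    obtain ⟨a',b',hda,hdb,hb1⟩ := reduce m hm a b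
    obtain ⟨c',d',hdc,hdd,hb2⟩ := reduce m hm c d
    set r := a'^2+a'*b'+b'^2+c'^2+c'*d'+d'^2 with hrdef
    have hrdvd : m ∣ r := by
      have hexp : r = m*p + ((a'-a)*(a'+a+b') + (b'-b)*(a+b'+b)
          + (c'-c)*(c'+c+d') + (d'-d)*(c+d'+d)) := by rw [← h, hrdef]; ring
      rw [hexp]
      exact dvd_add (Dvd.intro p rfl)
        (dvd_add (dvd_add (dvd_add (hda.mul_right _) (hdb.mul_right _))
          (hdc.mul_right _)) (hdd.mul_right _))
    have hr0 : 0 ≤ r := by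
      have := N2_nonneg a' b'; have := N2_nonneg c' d'; omega
    have hrlt : r < m^2 := by nlinarith [hb1, hb2, hm]
    have hrpos : 0 < r := by
      rcases hr0.lt_or_eq with h' | h'
      · exact h'
      exfalso
      have hz1 : a'^2+a'*b'+b'^2 = 0 := by
        have := N2_nonneg a' b'; have := N2_nonneg c' d'; omega
      have hz2 : c'^2+c'*d'+d'^2 = 0 := by
        have := N2_nonneg a' b'; omega
      obtain ⟨ha0, hb0⟩ := N2_eq_zero hz1
      obtain ⟨hc0, hd0⟩ := N2_eq_zero hz2
      rw [ha0, zero_sub] at hda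
      rw [hb0, zero_sub] at hdb
      rw [hc0, zero_sub] at hdc
      rw [hd0, zero_sub] at hdd
      have hma : m ∣ a := (dvd_neg).mp hda
      have hmb : m ∣ b := (dvd_neg).mp hdb
      have hmc : m ∣ c := (dvd_neg).mp hdc
      have hmd : m ∣ d := (dvd_neg).mp hdd
      obtain ⟨a1, rfl⟩ := hma
      obtain ⟨b1, rfl⟩ := hmb
      obtain ⟨c1, rfl⟩ := hmc
      obtain ⟨d1, rfl⟩ := hmd
      have hm2 : m * (m * (a1^2+a1*b1+b1^2+c1^2+c1*d1+d1^2)) = m * p := by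
        rw [← h]; ring
      have hmp' : m ∣ p := ⟨_, (mul_left_cancel₀ hm.ne' hm2).symm⟩
      obtain ⟨n, hn⟩ := hmp'
      rcases (hp.irreducible.isUnit_or_isUnit hn).symm with hu | hu
      · rcases Int.isUnit_iff.mp hu with rfl | rfl <;> omega
      · rcases Int.isUnit_iff.mp hu with rfl | rfl <;> omega
    -- main descent step
    obtain ⟨m', hm'⟩ := hrdvd
    have hm'pos : 0 < m' := by
      nlinarith [hm' ▸ hrpos, hm]
    have hm'lt : m' < m := by nlinarith [hm' ▸ hrlt]
    obtain ⟨e₁, he₁⟩ : m ∣ a*a'+a*b'+b*b' + c*c'+c*d'+d*d' := by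
      have hx : a*a'+a*b'+b*b'+c*c'+c*d'+d*d'
          = m*p + (a*(a'-a) + a*(b'-b) + b*(b'-b) + c*(c'-c) + c*(d'-d) + d*(d'-d)) := by
        rw [← h]; ring
      rw [hx]
      exact dvd_add ⟨p, rfl⟩ (dvd_add (dvd_add (dvd_add (dvd_add (dvd_add
        (hda.mul_left _) (hdb.mul_left _)) (hdb.mul_left _)) (hdc.mul_left _))
        (hdd.mul_left _)) (hdd.mul_left _))
    obtain ⟨e₂, he₂⟩ : m ∣ b*a'-a*b' + d*c'-c*d' := by
      have hx : b*a'-a*b'+d*c'-c*d'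
          = b*(a'-a) - a*(b'-b) + d*(c'-c) - c*(d'-d) := by ring
      rw [hx]
      exact dvd_sub (dvd_add (dvd_sub (hda.mul_left _) (hdb.mul_left _)) (hdc.mul_left _))
        (hdd.mul_left _)
    obtain ⟨f₁, hf₁⟩ : m ∣ c*a' - d*b' - a*c' + b*d' := by
      have hx : c*a' - d*b' - a*c' + b*d'
          = c*(a'-a) - d*(b'-b) - a*(c'-c) + b*(d'-d) := by ring
      rw [hx]
      exact dvd_add (dvd_sub (dvd_sub (hda.mul_left _) (hdb.mul_left _)) (hdc.mul_left _))
        (hdd.mul_left _)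
    obtain ⟨f₂, hf₂⟩ : m ∣ c*b' + d*a' + d*b' - a*d' - b*c' - b*d' := by
      have hx : c*b' + d*a' + d*b' - a*d' - b*c' - b*d'
          = c*(b'-b) + d*(a'-a) + d*(b'-b) - a*(d'-d) - b*(c'-c) - b*(d'-d) := by ring
      rw [hx]
      exact dvd_sub (dvd_sub (dvd_sub (dvd_add (dvd_add (hdb.mul_left _) (hda.mul_left _))
        (hdb.mul_left _)) (hdd.mul_left _)) (hdc.mul_left _)) (hdd.mul_left _)
    have hkey : m^2 * (e₁^2+e₁*e₂+e₂^2+f₁^2+f₁*f₂+f₂^2) = m^2 * (m'*p) := by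
      have expand : m^2 * (e₁^2+e₁*e₂+e₂^2+f₁^2+f₁*f₂+f₂^2)
          = (m*e₁)^2+(m*e₁)*(m*e₂)+(m*e₂)^2+(m*f₁)^2+(m*f₁)*(m*f₂)+(m*f₂)^2 := by ring
      rw [expand, ← he₁, ← he₂, ← hf₁, ← hf₂]
      have hbig : (a*a'+a*b'+b*b' + c*c'+c*d'+d*d')^2
            + (a*a'+a*b'+b*b' + c*c'+c*d'+d*d') * (b*a'-a*b' + d*c'-c*d')
            + (b*a'-a*b' + d*c'-c*d')^2
            + (c*a' - d*b' - a*c' + b*d')^2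
            + (c*a' - d*b' - a*c' + b*d') * (c*b' + d*a' + d*b' - a*d' - b*c' - b*d')
            + (c*b' + d*a' + d*b' - a*d' - b*c' - b*d')^2
          = (a^2+a*b+b^2+c^2+c*d+d^2) * (a'^2+a'*b'+b'^2+c'^2+c'*d'+d'^2) := by ring
      rw [hbig, h, ← hrdef, hm']
      ring
    have hkey2 : e₁^2+e₁*e₂+e₂^2+f₁^2+f₁*f₂+f₂^2 = m'*p :=
      mul_left_cancel₀ (pow_ne_zero 2 hm.ne') hkey
    exact ih m' (by omega) hm'pos (by omega) ⟨e₁,e₂,f₁,f₂, hkey2⟩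

lemma rep_prime (p : ℕ) (hp : p.Prime) : Rep (p : ℤ) := by
  rcases eq_or_ne p 2 with rfl | h2
  · exact ⟨1,0,1,0, by norm_num⟩
  rcases eq_or_ne p 3 with rfl | h3
  · exact ⟨1,1,0,0, by norm_num⟩
  haveI : Fact p.Prime := ⟨hp⟩
  have hodd : Fintype.card (ZMod p) % 2 = 1 := by
    rw [ZMod.card]; exact Nat.odd_iff.mp (hp.odd_of_ne_two h2)
  have h3z : (3 : ZMod p) ≠ 0 := by
    intro hz
    have : (p : ℕ) ∣ 3 := (ZMod.natCast_eq_zero_iff 3 p).mp (by exact_mod_cast hz)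
    exact h3 ((Nat.prime_dvd_prime_iff_eq hp (by norm_num)).mp this)
  have h2z : (2 : ZMod p) ≠ 0 := by
    intro hz
    have : (p : ℕ) ∣ 2 := (ZMod.natCast_eq_zero_iff 2 p).mp (by exact_mod_cast hz)
    exact h2 ((Nat.prime_dvd_prime_iff_eq hp (by norm_num)).mp this)
  have hf : (X^2 : (ZMod p)[X]).degree = 2 := degree_X_pow 2
  have hg : ((C 3) * X^2 + C 4 : (ZMod p)[X]).degree = 2 := by
    compute_degree!
  obtain ⟨u, v, huv⟩ := FiniteField.exists_root_sum_quadratic hf hg hodd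
  have huv2 : u^2 + (3*v^2 + 4) = 0 := by simpa using huv
  set a := (u - v) * (2 : ZMod p)⁻¹ with ha
  have h2a : 2*a = u - v := by
    rw [ha]; field_simp
  have h4 : (4 : ZMod p) ≠ 0 := by
    have : (4 : ZMod p) = 2 * 2 := by norm_num
    rw [this]; exact mul_ne_zero h2z h2z
  have hsol : a^2 + a*v + v^2 + 1 = 0 := by
    have h40 : (4 : ZMod p) * (a^2 + a*v + v^2 + 1) = 0 := by
      linear_combination huv2 + (2*a + v + u) * h2a
    exact (mul_eq_zero.mp h40).resolve_left h4
  obtain ⟨A, hA⟩ := ZMod.intCast_surjective (n := p) a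
  obtain ⟨B, hB⟩ := ZMod.intCast_surjective (n := p) v
  have hdvd : (p:ℤ) ∣ A^2 + A*B + B^2 + 1 := by
    rw [← ZMod.intCast_zmod_eq_zero_iff_dvd]
    push_cast
    rw [hA, hB]
    exact hsol
  have hppos : (0:ℤ) < (p:ℤ) := by exact_mod_cast hp.pos
  obtain ⟨A', B', hdA, hdB, hbd⟩ := reduce (p:ℤ) hppos A B
  have hdvd' : (p:ℤ) ∣ A'^2 + A'*B' + B'^2 + 1 := by
    have hx : A'^2+A'*B'+B'^2+1
        = (A^2+A*B+B^2+1) + ((A'-A)*(A'+A+B') + (B'-B)*(A+B'+B)) := by ring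
    rw [hx]
    exact dvd_add hdvd (dvd_add (hdA.mul_right _) (hdB.mul_right _))
  obtain ⟨m, hmev⟩ := hdvd'
  have hp2 : (2:ℤ) ≤ (p:ℤ) := by exact_mod_cast hp.two_le
  have hm0 : 0 < m := by nlinarith [N2_nonneg A' B']
  have hmlt : m < (p:ℤ) := by nlinarith [N2_nonneg A' B']
  exact descent (p:ℤ) (Nat.prime_iff_prime_int.mp hp) m.natAbs m le_rfl hm0 hmlt
    ⟨A', B', 1, 0, by linarith [hmev]⟩

lemma rep_nat : ∀ n : ℕ, 0 < n → Rep (n:ℤ) := by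
  intro n
  induction n using Nat.strong_induction_on with
  | _ n ih =>
  intro hn
  rcases eq_or_ne n 1 with rfl | h1
  · exact ⟨1,0,0,0, by norm_num⟩
  have hq := Nat.minFac_prime h1
  have hd := Nat.minFac_dvd n
  have h2 : n / n.minFac < n := Nat.div_lt_self hn hq.one_lt
  have h3 : 0 < n / n.minFac := Nat.div_pos (Nat.minFac_le hn) hq.pos
  have hrep := rep_mul (rep_prime _ hq) (ih _ h2 h3)
  have hcast : (n.minFac : ℤ) * ((n / n.minFac : ℕ) : ℤ) = (n:ℤ) := by
    exact_mod_cast congrArg (Nat.cast : ℕ → ℤ) (Nat.mul_div_cancel' hd)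
  rwa [hcast] at hrep

end Stmt17Aux

theorem stmt_17 (n : ℕ) (hn : 0 < n) :
    ∃ x₁ x₂ y₁ y₂ : ℤ,
      x₁ ^ 2 + x₁ * x₂ + x₂ ^ 2 + y₁ ^ 2 + y₁ * y₂ + y₂ ^ 2 = (n : ℤ) := by
  obtain ⟨a, b, c, d, h⟩ := Stmt17Aux.rep_nat n hn
  exact ⟨a, b, c, d, h⟩
end
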